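/- arXiv:2603.00914 — 8 statements merged into one kernel-verified Lean document; each statement's English description precedes it below -/
import Mathlib

section
/- Let k ≥ 4 and suppose 0 < r ≤ L_i for every i ∈ {1,…,k}. Then the model graph (G_k)_{r,L} has exactly k² + k vertices, exactly 2k² − 2k edges, and is connected; consequently e((G_k)_{r,L}) − v((G_k)_{r,L}) + c((G_k)_{r,L}) = k² − 3k + 1. -/
/-- A pair `(x,y)` is a vertex of the model graph `(G_k)_{r,L}`. -/
def IsModelVertex (k : ℕ) (r : ℝ) (L : ℕ → ℝ) (p : ℕ × ℕ) : Prop :=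
  p.1 ≤ k ∧ p.2 ≤ k ∧ p.1 ≠ p.2 ∧ r ≤ L p.1 + L p.2

/-- The vertex type of the model graph `(G_k)_{r,L}`. -/
def ModelVertex (k : ℕ) (r : ℝ) (L : ℕ → ℝ) : Type :=
  {p : ℕ × ℕ // IsModelVertex k r L p}

/-- The adjacency relation of the model graph `(G_k)_{r,L}`. -/
def ModelAdj (r : ℝ) (L : ℕ → ℝ) (a b : ℕ × ℕ) : Prop :=
  (a.1 = b.1 ∧ ((a.2 = 0 ∧ b.2 ≠ 0) ∨ (a.2 ≠ 0 ∧ b.2 = 0)) ∧ r ≤ L a.1) ∨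
  (a.2 = b.2 ∧ ((a.1 = 0 ∧ b.1 ≠ 0) ∨ (a.1 ≠ 0 ∧ b.1 = 0)) ∧ r ≤ L a.2)

theorem ModelAdj.symm {r : ℝ} {L : ℕ → ℝ} {a b : ℕ × ℕ} (h : ModelAdj r L a b) :
    ModelAdj r L b a := by
  rcases h with ⟨h1, h2, h3⟩ | ⟨h1, h2, h3⟩
  · exact Or.inl ⟨h1.symm, by tauto, h1 ▸ h3⟩
  · exact Or.inr ⟨h1.symm, by tauto, h1 ▸ h3⟩

theorem ModelAdj.irrefl {r : ℝ} {L : ℕ → ℝ} {a : ℕ × ℕ} (h : ModelAdj r L a a) : False := by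
  rcases h with ⟨_, h2, _⟩ | ⟨_, h2, _⟩ <;> tauto

/-- The model graph `(G_k)_{r,L}`. -/
def modelGraph (k : ℕ) (r : ℝ) (L : ℕ → ℝ) : SimpleGraph (ModelVertex k r L) where
  Adj a b := ModelAdj r L a.val b.val
  symm := ⟨fun _ _ h => ModelAdj.symm h⟩
  loopless := ⟨fun _ h => ModelAdj.irrefl h⟩

section Aux

variable {k : ℕ} {r : ℝ} {L : ℕ → ℝ}

structure ModelHyp (k : ℕ) (r : ℝ) (L : ℕ → ℝ) : Prop where
  hk : 4 ≤ k
  hr : 0 < r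
  hL0 : L 0 = 0
  hrL : ∀ i, 1 ≤ i → i ≤ k → r ≤ L i

def Epairs (k : ℕ) : Finset (ℕ × ℕ) := (Finset.Icc 1 k).offDiag

lemma mem_Epairs {k : ℕ} {p : ℕ × ℕ} :
    p ∈ Epairs k ↔ 1 ≤ p.1 ∧ p.1 ≤ k ∧ 1 ≤ p.2 ∧ p.2 ≤ k ∧ p.1 ≠ p.2 := by
  simp only [Epairs, Finset.mem_offDiag, Finset.mem_Icc]
  tauto

namespace ModelHyp

lemma Lnonneg (H : ModelHyp k r L) (i : ℕ) (hi : i ≤ k) : 0 ≤ L i := by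
  rcases Nat.eq_zero_or_pos i with h | h
  · rw [h, H.hL0]
  · exact le_trans H.hr.le (H.hrL i h hi)

lemma isVertex (H : ModelHyp k r L) {p : ℕ × ℕ} (h1 : p.1 ≤ k) (h2 : p.2 ≤ k)
    (h3 : p.1 ≠ p.2) : IsModelVertex k r L p := by
  refine ⟨h1, h2, h3, ?_⟩
  rcases Nat.eq_zero_or_pos p.1 with h | h
  · have hp2 : 1 ≤ p.2 := by omega
    have := H.hrL p.2 hp2 h2
    rw [h, H.hL0]; linarith
  · have := H.hrL p.1 h h1
    have := H.Lnonneg p.2 h2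
    linarith

lemma isVertex_iff (H : ModelHyp k r L) (p : ℕ × ℕ) :
    IsModelVertex k r L p ↔ p ∈ (Finset.range (k+1)).offDiag := by
  rw [Finset.mem_offDiag]
  simp only [Finset.mem_range, Nat.lt_succ_iff]
  constructor
  · rintro ⟨h1, h2, h3, -⟩; exact ⟨h1, h2, h3⟩
  · rintro ⟨h1, h2, h3⟩; exact H.isVertex h1 h2 h3

lemma card_vertex (H : ModelHyp k r L) : Nat.card (ModelVertex k r L) = k ^ 2 + k := by
  have e1 : ModelVertex k r L ≃ ((Finset.range (k+1)).offDiag : Finset (ℕ × ℕ)) :=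
    Equiv.subtypeEquivRight (fun p => by rw [H.isVertex_iff p])
  rw [Nat.card_congr e1, Nat.card_eq_finsetCard, Finset.offDiag_card, Finset.card_range]
  have : (k+1)*(k+1) = k^2 + 2*k + 1 := by ring
  omega

def vtx (H : ModelHyp k r L) (x y : ℕ) (h1 : x ≤ k) (h2 : y ≤ k) (h3 : x ≠ y) :
    ModelVertex k r L := ⟨(x, y), H.isVertex h1 h2 h3⟩

lemma vtx_eq_iff (H : ModelHyp k r L) {x y x' y' : ℕ} {h1 h2 h3 h1' h2' h3'} :
    H.vtx x y h1 h2 h3 = H.vtx x' y' h1' h2' h3' ↔ x = x' ∧ y = y' := by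
  constructor
  · intro h
    have hv := congrArg Subtype.val h
    exact ⟨congrArg Prod.fst hv, congrArg Prod.snd hv⟩
  · rintro ⟨rfl, rfl⟩
    rfl

lemma ne_zero_of_r_le (H : ModelHyp k r L) {x : ℕ} (h : r ≤ L x) : x ≠ 0 := by
  rintro rfl; rw [H.hL0] at h; linarith [H.hr]

lemma adj_left (H : ModelHyp k r L) {x y : ℕ} (hx1 : 1 ≤ x) (hxk : x ≤ k)
    (hy1 : 1 ≤ y) (hyk : y ≤ k) (hxy : x ≠ y) :
    (modelGraph k r L).Adj (H.vtx x 0 hxk k.zero_le (Nat.one_le_iff_ne_zero.mp hx1))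
      (H.vtx x y hxk hyk hxy) := by
  refine Or.inl ⟨rfl, Or.inl ⟨rfl, ?_⟩, H.hrL x hx1 hxk⟩
  show y ≠ 0
  omega

lemma adj_right (H : ModelHyp k r L) {x y : ℕ} (hx1 : 1 ≤ x) (hxk : x ≤ k)
    (hy1 : 1 ≤ y) (hyk : y ≤ k) (hxy : x ≠ y) :
    (modelGraph k r L).Adj (H.vtx 0 y k.zero_le hyk (Nat.one_le_iff_ne_zero.mp hy1).symm)
      (H.vtx x y hxk hyk hxy) := by
  refine Or.inr ⟨rfl, Or.inl ⟨rfl, ?_⟩, H.hrL y hy1 hyk⟩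
  show x ≠ 0
  omega

/-- the map parameterizing edges -/
noncomputable def edgeMap (H : ModelHyp k r L) :
    (Epairs k) ⊕ (Epairs k) → (modelGraph k r L).edgeSet
  | .inl p =>
      have h := mem_Epairs.mp p.property
      ⟨s(H.vtx p.val.1 0 h.2.1 k.zero_le (by omega), H.vtx p.val.1 p.val.2 h.2.1 h.2.2.2.1 h.2.2.2.2),
        H.adj_left h.1 h.2.1 h.2.2.1 h.2.2.2.1 h.2.2.2.2⟩
  | .inr p =>
      have h := mem_Epairs.mp p.property
      ⟨s(H.vtx 0 p.val.2 k.zero_le h.2.2.2.1 (by omega), H.vtx p.val.1 p.val.2 h.2.1 h.2.2.2.1 h.2.2.2.2),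
        H.adj_right h.1 h.2.1 h.2.2.1 h.2.2.2.1 h.2.2.2.2⟩

lemma edgeMap_injective (H : ModelHyp k r L) : Function.Injective H.edgeMap := by
  rintro (⟨⟨x1, y1⟩, hp1⟩ | ⟨⟨x1, y1⟩, hp1⟩) (⟨⟨x2, y2⟩, hp2⟩ | ⟨⟨x2, y2⟩, hp2⟩) h <;>
    obtain ⟨ha1, hb1, hc1, hd1, he1⟩ := mem_Epairs.mp hp1 <;>
    obtain ⟨ha2, hb2, hc2, hd2, he2⟩ := mem_Epairs.mp hp2 <;>
    simp only at ha1 hb1 hc1 hd1 he1 ha2 hb2 hc2 hd2 he2 <;>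
    simp only [edgeMap, Subtype.mk.injEq, Subtype.ext_iff, Sym2.eq_iff, vtx_eq_iff, Prod.mk.injEq] at h
  · obtain ⟨rfl, rfl⟩ : x1 = x2 ∧ y1 = y2 := by omega
    rfl
  · exfalso; omega
  · exfalso; omega
  · obtain ⟨rfl, rfl⟩ : x1 = x2 ∧ y1 = y2 := by omega
    rfl

lemma edgeMap_surjective (H : ModelHyp k r L) : Function.Surjective H.edgeMap := by
  rintro ⟨e, he⟩
  induction e using Sym2.ind with
  | _ a b =>
    rw [SimpleGraph.mem_edgeSet] at he
    obtain ⟨⟨x1, y1⟩, ha⟩ := a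
    obtain ⟨⟨x2, y2⟩, hb⟩ := b
    obtain ⟨ha1, ha2, ha3, -⟩ := ha
    obtain ⟨hb1, hb2, hb3, -⟩ := hb
    simp only at ha1 ha2 ha3 hb1 hb2 hb3
    rcases he with ⟨h1, ⟨h2, h2'⟩ | ⟨h2, h2'⟩, h3⟩ | ⟨h1, ⟨h2, h2'⟩ | ⟨h2, h2'⟩, h3⟩ <;>
      simp only at h1 h2 h2' h3
    · have hx0 := H.ne_zero_of_r_le h3
      subst h1; subst h2
      exact ⟨.inl ⟨(x1, y2), mem_Epairs.mpr ⟨by omega, by omega, by omega, by omega, by omega⟩⟩, rfl⟩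
    · have hx0 := H.ne_zero_of_r_le h3
      subst h1; subst h2'
      refine ⟨.inl ⟨(x1, y1), mem_Epairs.mpr ⟨by omega, by omega, by omega, by omega, by omega⟩⟩, ?_⟩
      exact Subtype.ext Sym2.eq_swap
    · have hy0 := H.ne_zero_of_r_le h3
      subst h1; subst h2
      exact ⟨.inr ⟨(x2, y1), mem_Epairs.mpr ⟨by omega, by omega, by omega, by omega, by omega⟩⟩, rfl⟩
    · have hy0 := H.ne_zero_of_r_le h3
      subst h1; subst h2'
      refine ⟨.inr ⟨(x1, y1), mem_Epairs.mpr ⟨by omega, by omega, by omega, by omega, by omega⟩⟩, ?_⟩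
      exact Subtype.ext Sym2.eq_swap

lemma card_edge (H : ModelHyp k r L) :
    Nat.card (modelGraph k r L).edgeSet = 2 * k ^ 2 - 2 * k := by
  rw [← Nat.card_eq_of_bijective H.edgeMap ⟨H.edgeMap_injective, H.edgeMap_surjective⟩,
    Nat.card_sum, Nat.card_eq_finsetCard, Epairs, Finset.offDiag_card, Nat.card_Icc,
    Nat.add_sub_cancel]
  have hk4 := H.hk
  have h2 : k ≤ k * k := Nat.le_mul_of_pos_left k (by omega)
  have h3 : 2 * k ^ 2 = k * k + k * k := by ring
  omega

lemma reach_aux (H : ModelHyp k r L) {x z : ℕ} (hx1 : 1 ≤ x) (hxk : x ≤ k)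
    (hz1 : 1 ≤ z) (hzk : z ≤ k) (hxz : x ≠ z) (h1z : (1 : ℕ) ≠ z) {h1 h2 h3 g1 g2 g3} :
    (modelGraph k r L).Reachable (H.vtx x 0 h1 h2 h3) (H.vtx 1 0 g1 g2 g3) :=
  ((H.adj_left hx1 hxk hz1 hzk hxz).reachable).trans
    (((H.adj_right hx1 hxk hz1 hzk hxz).symm.reachable).trans
      (((H.adj_right (le_refl 1) g1 hz1 hzk h1z).reachable).trans
        ((H.adj_left (le_refl 1) g1 hz1 hzk h1z).symm.reachable)))

lemma reach_hub (H : ModelHyp k r L) {x : ℕ} (hx1 : 1 ≤ x) (hxk : x ≤ k)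
    {h1 h2 h3 g1 g2 g3} :
    (modelGraph k r L).Reachable (H.vtx x 0 h1 h2 h3) (H.vtx 1 0 g1 g2 g3) := by
  have hk := H.hk
  rcases eq_or_ne x 2 with rfl | hx2
  · exact H.reach_aux (z := 3) hx1 hxk (by omega) (by omega) (by omega) (by omega)
  · exact H.reach_aux (z := 2) hx1 hxk (by omega) (by omega) (by omega) (by omega)

lemma reach_hub' (H : ModelHyp k r L) {y : ℕ} (hy1 : 1 ≤ y) (hyk : y ≤ k)
    {h1 h2 h3 g1 g2 g3} :
    (modelGraph k r L).Reachable (H.vtx 0 y h1 h2 h3) (H.vtx 1 0 g1 g2 g3) := by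
  have hk := H.hk
  rcases eq_or_ne y 1 with rfl | hy2
  · refine ((H.adj_right (x := 2) (by omega) (by omega) hy1 hyk (by omega)).reachable).trans ?_
    refine ((H.adj_left (x := 2) (by omega) (by omega) hy1 hyk (by omega)).symm.reachable).trans ?_
    exact H.reach_hub (by omega) (by omega)
  · refine ((H.adj_right (x := 1) (le_refl 1) g1 hy1 hyk (Ne.symm hy2)).reachable).trans ?_
    exact ((H.adj_left (le_refl 1) g1 hy1 hyk (Ne.symm hy2)).symm.reachable)

lemma reach_to_hub (H : ModelHyp k r L) (v : ModelVertex k r L) {g1 g2 g3} :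
    (modelGraph k r L).Reachable v (H.vtx 1 0 g1 g2 g3) := by
  have hk := H.hk
  obtain ⟨⟨x, y⟩, hvx, hvy, hvxy, hvr⟩ := v
  simp only at hvx hvy hvxy
  show (modelGraph k r L).Reachable (H.vtx x y hvx hvy hvxy) (H.vtx 1 0 g1 g2 g3)
  rcases Nat.eq_zero_or_pos y with rfl | hy
  · exact H.reach_hub (by omega) hvx
  · rcases Nat.eq_zero_or_pos x with rfl | hx
    · exact H.reach_hub' hy hvy
    · refine ((H.adj_left hx hvx hy hvy hvxy).symm.reachable).trans ?_
      exact H.reach_hub hx hvx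

lemma connected (H : ModelHyp k r L) : (modelGraph k r L).Connected := by
  have hk := H.hk
  have h1k : 1 ≤ k := by omega
  rw [SimpleGraph.connected_iff]
  refine ⟨?_, ⟨H.vtx 1 0 h1k k.zero_le one_ne_zero⟩⟩
  intro u v
  exact (H.reach_to_hub u (g1 := h1k) (g2 := k.zero_le) (g3 := one_ne_zero)).trans
    (H.reach_to_hub v (g1 := h1k) (g2 := k.zero_le) (g3 := one_ne_zero)).symm

lemma card_components (H : ModelHyp k r L) :
    Nat.card (modelGraph k r L).ConnectedComponent = 1 := by
  have hc := H.connected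
  have hk := H.hk
  rw [Nat.card_eq_one_iff_unique]
  constructor
  · constructor
    intro c d
    refine SimpleGraph.ConnectedComponent.ind₂ (fun u v => ?_) c d
    exact SimpleGraph.ConnectedComponent.sound (hc.preconnected u v)
  · exact ⟨(modelGraph k r L).connectedComponentMk
      (H.vtx 1 0 (by omega) k.zero_le one_ne_zero)⟩

end ModelHyp

end Aux

/-- if `4 ≤ k` and `0 < r ≤ L i` for all `i ∈ {1,…,k}`, then `(G_k)_{r,L}`
has `k² + k` vertices, `2k² − 2k` edges, is connected, and `e − v + c = k² − 3k + 1`. -/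
theorem model_counts_small_r (k : ℕ) (hk : 4 ≤ k) (r : ℝ) (hr : 0 < r) (L : ℕ → ℝ)
    (hL0 : L 0 = 0) (hLpos : ∀ i, 1 ≤ i → i ≤ k → 0 < L i)
    (hrL : ∀ i, 1 ≤ i → i ≤ k → r ≤ L i) :
    Nat.card (ModelVertex k r L) = k ^ 2 + k ∧
    Nat.card (modelGraph k r L).edgeSet = 2 * k ^ 2 - 2 * k ∧
    (modelGraph k r L).Connected ∧
    (Nat.card (modelGraph k r L).edgeSet : ℤ) - (Nat.card (ModelVertex k r L) : ℤ)
      + (Nat.card (modelGraph k r L).ConnectedComponent : ℤ)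
      = (k : ℤ) ^ 2 - 3 * (k : ℤ) + 1 := by
  have H : ModelHyp k r L := ⟨hk, hr, hL0, hrL⟩
  refine ⟨H.card_vertex, H.card_edge, H.connected, ?_⟩
  rw [H.card_vertex, H.card_edge, H.card_components]
  have h1 : 2 * k ≤ 2 * k ^ 2 := by nlinarith
  rw [Nat.cast_sub h1]
  push_cast
  ring
end

section
/- Let k ≥ 4 and suppose L_2 ≥ L_3 ≥ ⋯ ≥ L_k. If L_4 < r and L_1 < r, then the model graph (G_k)_{r,L} is acyclic, i.e., it contains no cycles. -/
open SimpleGraph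

private lemma cycle_start_two_neighbors {V : Type*} {G : SimpleGraph V} {u : V}
    {c : G.Walk u u} (hc : c.IsCycle) :
    ∃ a b, a ≠ b ∧ c.toSubgraph.Adj u a ∧ c.toSubgraph.Adj u b := by
  have h3 := hc.three_le_length
  cases c with
  | nil => simp at h3
  | @cons _ w _ h q =>
    rw [Walk.cons_isCycle_iff] at hc
    have hql : 2 ≤ q.length := by
      simp only [Walk.length_cons] at h3; omega
    refine ⟨w, q.getVert (q.length - 1), ?_, ?_, ?_⟩
    · intro hab
      apply hc.2
      have hadj := q.toSubgraph_adj_getVert (i := q.length - 1) (by omega)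
      rw [show q.length - 1 + 1 = q.length by omega, Walk.getVert_length] at hadj
      have hmem : s(q.getVert (q.length - 1), u) ∈ q.edges :=
        (Walk.mem_edges_toSubgraph q).mp hadj
      rw [← hab] at hmem
      rw [Sym2.eq_swap]
      exact hmem
    · simp [Walk.toSubgraph]
    · have hadj := (Walk.cons h q).toSubgraph_adj_getVert (i := q.length)
        (by simp [Walk.length_cons])
      have e1 : (Walk.cons h q).getVert (q.length + 1) = u := by
        rw [Walk.getVert_cons_succ, Walk.getVert_length]
      have e2 : (Walk.cons h q).getVert q.length = q.getVert (q.length - 1) := by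
        conv_lhs => rw [show q.length = (q.length - 1) + 1 by omega]
        rw [Walk.getVert_cons_succ]
      rw [e1, e2] at hadj
      exact hadj.symm

private lemma cycle_two_neighbors {V : Type*} [DecidableEq V] {G : SimpleGraph V} {v u : V}
    {c : G.Walk v v} (hc : c.IsCycle) (hu : u ∈ c.support) :
    ∃ a b, a ≠ b ∧ a ∈ c.support ∧ b ∈ c.support ∧ G.Adj u a ∧ G.Adj u b := by
  obtain ⟨a, b, hab, ha, hb⟩ := cycle_start_two_neighbors (hc.rotate hu)
  rw [Walk.toSubgraph_rotate] at ha hb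
  have hav : a ∈ c.support := (Walk.mem_verts_toSubgraph c).mp ha.snd_mem
  have hbv : b ∈ c.support := (Walk.mem_verts_toSubgraph c).mp hb.snd_mem
  exact ⟨a, b, hab, hav, hbv, ha.adj_sub, hb.adj_sub⟩

/-- if `4 ≤ k`, `L 2 ≥ L 3 ≥ ⋯ ≥ L k`, `L 4 < r` and `L 1 < r`, then the
model graph `(G_k)_{r,L}` is acyclic. -/
theorem model_acyclic_of_L4_lt (k : ℕ) (hk : 4 ≤ k) (r : ℝ) (hr : 0 < r) (L : ℕ → ℝ)
    (hL0 : L 0 = 0) (hLpos : ∀ i, 1 ≤ i → i ≤ k → 0 < L i)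
    (hmono : ∀ i j, 2 ≤ i → i ≤ j → j ≤ k → L j ≤ L i)
    (hL4 : L 4 < r) (hL1 : L 1 < r) :
    (modelGraph k r L).IsAcyclic := by
  classical
  intro v c hc
  have htwo3 : ∀ i : ℕ, i ≤ k → r ≤ L i → i = 2 ∨ i = 3 := by
    intro i hik hri
    by_contra hcon
    push_neg at hcon
    rcases Nat.lt_or_ge i 4 with h4 | h4
    · interval_cases i
      · rw [hL0] at hri; linarith
      · linarith
      · exact hcon.1 rfl
      · exact hcon.2 rfl
    · have := hmono 4 i (by norm_num) h4 hik
      linarith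
  have adj_cases : ∀ u a : ModelVertex k r L, (modelGraph k r L).Adj u a →
      (u.val.1 = a.val.1 ∧ (u.val.1 = 2 ∨ u.val.1 = 3) ∧
        ((u.val.2 = 0 ∧ a.val.2 ≠ 0) ∨ (u.val.2 ≠ 0 ∧ a.val.2 = 0))) ∨
      (u.val.2 = a.val.2 ∧ (u.val.2 = 2 ∨ u.val.2 = 3) ∧
        ((u.val.1 = 0 ∧ a.val.1 ≠ 0) ∨ (u.val.1 ≠ 0 ∧ a.val.1 = 0))) := by
    intro u a h
    obtain ⟨hu1, hu2, -, -⟩ := u.prop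
    have h' : ModelAdj r L u.val a.val := h
    rcases h' with ⟨h1, h2, h3⟩ | ⟨h1, h2, h3⟩
    · exact Or.inl ⟨h1, htwo3 _ hu1 h3, h2⟩
    · exact Or.inr ⟨h1, htwo3 _ hu2 h3, h2⟩
  have key : ∀ u : ModelVertex k r L, u ∈ c.support →
      ∃ a b : ModelVertex k r L, a ≠ b ∧ a ∈ c.support ∧ b ∈ c.support ∧
        (modelGraph k r L).Adj u a ∧ (modelGraph k r L).Adj u b :=
    fun u hu => cycle_two_neighbors hc hu
  have claim1 : ∀ u : ModelVertex k r L, u ∈ c.support → u.val.1 ≠ 0 → u.val.2 ≠ 0 →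
      (u.val.1 = 2 ∨ u.val.1 = 3) ∧ (u.val.2 = 2 ∨ u.val.2 = 3) := by
    intro u hu hx hy
    obtain ⟨a, b, hab, ha, hb, hua, hub⟩ := key u hu
    have hform : ∀ w : ModelVertex k r L, (modelGraph k r L).Adj u w →
        (w.val = (u.val.1, 0) ∧ (u.val.1 = 2 ∨ u.val.1 = 3)) ∨
        (w.val = (0, u.val.2) ∧ (u.val.2 = 2 ∨ u.val.2 = 3)) := by
      intro w hw
      rcases adj_cases u w hw with ⟨h1, h2, h3⟩ | ⟨h1, h2, h3⟩
      · left
        have hw2 : w.val.2 = 0 := by tauto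
        exact ⟨Prod.ext_iff.mpr ⟨h1.symm, hw2⟩, h2⟩
      · right
        have hw1 : w.val.1 = 0 := by tauto
        exact ⟨Prod.ext_iff.mpr ⟨hw1, h1.symm⟩, h2⟩
    rcases hform a hua with ⟨haf, g2⟩ | ⟨haf, g2⟩ <;>
      rcases hform b hub with ⟨hbf, g2'⟩ | ⟨hbf, g2'⟩
    · exact absurd (Subtype.ext (haf.trans hbf.symm)) hab
    · exact ⟨g2, g2'⟩
    · exact ⟨g2', g2⟩
    · exact absurd (Subtype.ext (haf.trans hbf.symm)) hab
  have claim2 : ∀ u : ModelVertex k r L, u ∈ c.support → u.val.2 = 0 → False := by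
    intro u hu hy
    obtain ⟨a, b, hab, ha, hb, hua, hub⟩ := key u hu
    have hx0 : u.val.1 ≠ 0 := fun h0 => u.prop.2.2.1 (h0.trans hy.symm)
    have hform : ∀ w : ModelVertex k r L, (modelGraph k r L).Adj u w →
        w.val.1 = u.val.1 ∧ w.val.2 ≠ 0 := by
      intro w hw
      rcases adj_cases u w hw with ⟨h1, h2, h3⟩ | ⟨h1, h2, h3⟩
      · exact ⟨h1.symm, by tauto⟩
      · omega
    obtain ⟨ha1, ha2⟩ := hform a hua
    obtain ⟨hb1, hb2⟩ := hform b hub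
    obtain ⟨hA1, hA2⟩ := claim1 a ha (by rw [ha1]; exact hx0) ha2
    obtain ⟨hB1, hB2⟩ := claim1 b hb (by rw [hb1]; exact hx0) hb2
    have hane : a.val.1 ≠ a.val.2 := a.prop.2.2.1
    have hbne : b.val.1 ≠ b.val.2 := b.prop.2.2.1
    exact hab (Subtype.ext (Prod.ext_iff.mpr ⟨by omega, by omega⟩))
  have claim3 : ∀ u : ModelVertex k r L, u ∈ c.support → u.val.1 = 0 → False := by
    intro u hu hx
    obtain ⟨a, b, hab, ha, hb, hua, hub⟩ := key u hu
    have hy0 : u.val.2 ≠ 0 := fun h0 => u.prop.2.2.1 (hx.trans h0.symm)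
    have hform : ∀ w : ModelVertex k r L, (modelGraph k r L).Adj u w →
        w.val.2 = u.val.2 ∧ w.val.1 ≠ 0 := by
      intro w hw
      rcases adj_cases u w hw with ⟨h1, h2, h3⟩ | ⟨h1, h2, h3⟩
      · omega
      · exact ⟨h1.symm, by tauto⟩
    obtain ⟨ha1, ha2⟩ := hform a hua
    obtain ⟨hb1, hb2⟩ := hform b hub
    obtain ⟨hA1, hA2⟩ := claim1 a ha ha2 (by rw [ha1]; exact hy0)
    obtain ⟨hB1, hB2⟩ := claim1 b hb hb2 (by rw [hb1]; exact hy0)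
    have hane : a.val.1 ≠ a.val.2 := a.prop.2.2.1
    have hbne : b.val.1 ≠ b.val.2 := b.prop.2.2.1
    exact hab (Subtype.ext (Prod.ext_iff.mpr ⟨by omega, by omega⟩))
  have hv : v ∈ c.support := SimpleGraph.Walk.start_mem_support c
  by_cases h1 : v.val.1 = 0
  · exact claim3 v hv h1
  by_cases h2 : v.val.2 = 0
  · exact claim2 v hv h2
  obtain ⟨a, b, hab, ha, hb, hua, hub⟩ := key v hv
  rcases adj_cases v a hua with ⟨g1, g2, g3⟩ | ⟨g1, g2, g3⟩
  · exact claim2 a ha (by tauto)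
  · exact claim3 a ha (by tauto)
end

section
/- Let k ≥ 4, suppose L_2 ≥ L_3 ≥ ⋯ ≥ L_k, L_4 < r ≤ L_3, and r ≤ L_1. Then the model graph (G_k)_{r,L} has exactly k(k−1) + 6 − 2h vertices, exactly 6(k−1) edges, and exactly (k−3)(k−4) + 1 − 2h connected components; in particular e((G_k)_{r,L}) − v((G_k)_{r,L}) + c((G_k)_{r,L}) = 1. -/
/-- The number `h` of unordered pairs `{i,j} ⊆ {1,…,k}` with `i ≠ j` and `L i + L j < r`,
counted via representatives `i < j`. -/
noncomputable def pairCount (k : ℕ) (r : ℝ) (L : ℕ → ℝ) : ℕ :=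
  Set.ncard {p : ℕ × ℕ | 1 ≤ p.1 ∧ p.1 < p.2 ∧ p.2 ≤ k ∧ L p.1 + L p.2 < r}


/-! ### Auxiliary definitions and lemmas -/

open Classical in
noncomputable def goodF (k : ℕ) (r : ℝ) (L : ℕ → ℝ) : Finset (ℕ × ℕ) :=
  ((Finset.Icc 1 k).offDiag).filter (fun p => r ≤ L p.1 + L p.2)

open Classical in
noncomputable def badF (k : ℕ) (r : ℝ) (L : ℕ → ℝ) : Finset (ℕ × ℕ) :=
  ((Finset.Icc 1 k).offDiag).filter (fun p => L p.1 + L p.2 < r)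

def centersF : Finset (ℕ × ℕ) := {(0,1),(0,2),(0,3),(1,0),(2,0),(3,0)}

open Classical in
noncomputable def isoF (k : ℕ) (r : ℝ) (L : ℕ → ℝ) : Finset (ℕ × ℕ) :=
  ((Finset.Icc 4 k).offDiag).filter (fun p => r ≤ L p.1 + L p.2)

def DtF (k : ℕ) : Finset (ℕ × ℕ) :=
  ((Finset.Icc 1 3) ×ˢ (Finset.Icc 1 k)).filter (fun p => p.1 ≠ p.2)

def DfF (k : ℕ) : Finset (ℕ × ℕ) :=
  ((Finset.Icc 1 k) ×ˢ (Finset.Icc 1 3)).filter (fun p => p.1 ≠ p.2)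

open Classical in
lemma badF_card_eq (k : ℕ) (r : ℝ) (L : ℕ → ℝ) :
    (badF k r L).card = 2 * pairCount k r L := by
  classical
  set Blt := (badF k r L).filter (fun p => p.1 < p.2) with hBlt
  set Bgt := (badF k r L).filter (fun p => p.2 < p.1) with hBgt
  have hsplit : badF k r L = Blt ∪ Bgt := by
    ext p
    simp only [hBlt, hBgt, Finset.mem_union, Finset.mem_filter, badF, Finset.mem_offDiag,
      Finset.mem_Icc] at *
    constructor
    · rintro ⟨⟨h1, h2, h3⟩, h4⟩
      rcases Nat.lt_or_ge p.1 p.2 with h | h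
      · exact Or.inl ⟨⟨⟨h1, h2, h3⟩, h4⟩, h⟩
      · exact Or.inr ⟨⟨⟨h1, h2, h3⟩, h4⟩, lt_of_le_of_ne h (fun e => h3 e.symm)⟩
    · rintro (⟨h, _⟩ | ⟨h, _⟩) <;> exact h
  have hdisj : Disjoint Blt Bgt := by
    rw [Finset.disjoint_left]
    intro p h1 h2
    simp only [hBlt, hBgt, Finset.mem_filter] at h1 h2
    omega
  have hcardgt : Bgt.card = Blt.card := by
    apply Finset.card_bij (fun p _ => p.swap)
    · intro p hp
      simp only [hBgt, hBlt, Finset.mem_filter, badF, Finset.mem_offDiag, Finset.mem_Icc,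
        Prod.fst_swap, Prod.snd_swap] at *
      obtain ⟨⟨⟨h1, h2, h3⟩, h4⟩, h5⟩ := hp
      exact ⟨⟨⟨h2, h1, fun e => h3 e.symm⟩, by linarith⟩, h5⟩
    · intro p _ q _ h
      exact Prod.swap_injective h
    · intro p hp
      refine ⟨p.swap, ?_, by simp⟩
      simp only [hBgt, hBlt, Finset.mem_filter, badF, Finset.mem_offDiag, Finset.mem_Icc,
        Prod.fst_swap, Prod.snd_swap] at *
      obtain ⟨⟨⟨h1, h2, h3⟩, h4⟩, h5⟩ := hp
      exact ⟨⟨⟨h2, h1, fun e => h3 e.symm⟩, by linarith⟩, h5⟩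
  have hpc : pairCount k r L = Blt.card := by
    rw [pairCount, ← Set.ncard_coe_finset]
    congr 1
    ext p
    simp only [hBlt, Finset.coe_filter, badF, Set.mem_setOf_eq, Finset.mem_offDiag,
      Finset.mem_filter, Finset.mem_Icc]
    constructor
    · rintro ⟨h1, h2, h3, h4⟩
      exact ⟨⟨⟨⟨h1, by omega⟩, ⟨by omega, h3⟩, by omega⟩, h4⟩, h2⟩
    · rintro ⟨⟨⟨⟨h1, _⟩, ⟨_, h3⟩, _⟩, h4⟩, h2⟩
      exact ⟨h1, h2, h3, h4⟩
  rw [hsplit, Finset.card_union_of_disjoint hdisj, hcardgt, hpc]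
  ring

lemma good_add_bad (k : ℕ) (hk : 1 ≤ k) (r : ℝ) (L : ℕ → ℝ) :
    (goodF k r L).card + (badF k r L).card = k * k - k := by
  classical
  have e2 : badF k r L = ((Finset.Icc 1 k).offDiag).filter (fun p => ¬ r ≤ L p.1 + L p.2) := by
    ext p
    simp [badF, not_le]
  have key := Finset.card_filter_add_card_filter_not
    (s := (Finset.Icc 1 k).offDiag) (p := fun p => r ≤ L p.1 + L p.2)
  rw [goodF, e2, key, Finset.offDiag_card, Nat.card_Icc]
  have : k + 1 - 1 = k := by omega
  rw [this]

lemma iso_add_bad (k : ℕ) (hk : 4 ≤ k) (r : ℝ) (hr : 0 < r) (L : ℕ → ℝ)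
    (hL0 : L 0 = 0) (hLpos : ∀ i, 1 ≤ i → i ≤ k → 0 < L i)
    (hmono : ∀ i j, 2 ≤ i → i ≤ j → j ≤ k → L j ≤ L i)
    (hL4 : L 4 < r) (hL3 : r ≤ L 3) (hL1 : r ≤ L 1) :
    (isoF k r L).card + (badF k r L).card = (k - 3) * (k - 3) - (k - 3) := by
  classical
  have hLbig : ∀ x, 1 ≤ x → x ≤ 3 → r ≤ L x := by
    intro x h1 h3
    interval_cases x
    · exact hL1
    · exact le_trans hL3 (hmono 2 3 le_rfl (by norm_num) (by omega))
    · exact hL3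
  have hbadsub : badF k r L = ((Finset.Icc 4 k).offDiag).filter (fun p => L p.1 + L p.2 < r) := by
    ext p
    simp only [badF, Finset.mem_filter, Finset.mem_offDiag, Finset.mem_Icc]
    constructor
    · rintro ⟨⟨⟨h1a, h1b⟩, ⟨h2a, h2b⟩, h3⟩, h4⟩
      have hp1 : 4 ≤ p.1 := by
        by_contra hc
        have : r ≤ L p.1 := hLbig p.1 h1a (by omega)
        have : 0 < L p.2 := hLpos p.2 h2a h2b
        linarith
      have hp2 : 4 ≤ p.2 := by
        by_contra hc
        have : r ≤ L p.2 := hLbig p.2 h2a (by omega)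
        have : 0 < L p.1 := hLpos p.1 h1a h1b
        linarith
      exact ⟨⟨⟨hp1, h1b⟩, ⟨hp2, h2b⟩, h3⟩, h4⟩
    · rintro ⟨⟨⟨h1a, h1b⟩, ⟨h2a, h2b⟩, h3⟩, h4⟩
      exact ⟨⟨⟨by omega, h1b⟩, ⟨by omega, h2b⟩, h3⟩, h4⟩
  have e2 : badF k r L = ((Finset.Icc 4 k).offDiag).filter (fun p => ¬ r ≤ L p.1 + L p.2) := by
    rw [hbadsub]
    ext p
    simp [not_le]
  have key := Finset.card_filter_add_card_filter_not
    (s := (Finset.Icc 4 k).offDiag) (p := fun p => r ≤ L p.1 + L p.2)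
  rw [isoF, e2, key, Finset.offDiag_card, Nat.card_Icc]
  have : k + 1 - 4 = k - 3 := by omega
  rw [this]

lemma vertex_card (k : ℕ) (hk : 4 ≤ k) (r : ℝ) (hr : 0 < r) (L : ℕ → ℝ)
    (hL0 : L 0 = 0) (hLpos : ∀ i, 1 ≤ i → i ≤ k → 0 < L i)
    (hmono : ∀ i j, 2 ≤ i → i ≤ j → j ≤ k → L j ≤ L i)
    (hL4 : L 4 < r) (hL3 : r ≤ L 3) (hL1 : r ≤ L 1) :
    Nat.card (ModelVertex k r L) = (goodF k r L).card + 6 := by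
  classical
  have hLbig : ∀ x, 1 ≤ x → x ≤ 3 → r ≤ L x := by
    intro x h1 h3
    interval_cases x
    · exact hL1
    · exact le_trans hL3 (hmono 2 3 le_rfl (by norm_num) (by omega))
    · exact hL3
  have hLsmall : ∀ x, x ≤ k → r ≤ L x → 1 ≤ x ∧ x ≤ 3 := by
    intro x hxk hrx
    constructor
    · by_contra hc
      have : x = 0 := by omega
      rw [this, hL0] at hrx; linarith
    · by_contra hc
      have : L x ≤ L 4 := hmono 4 x (by norm_num) (by omega) hxk
      linarith
  have hset : {p : ℕ × ℕ | IsModelVertex k r L p} = ↑(goodF k r L ∪ centersF) := by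
    ext p
    simp only [Set.mem_setOf_eq, Finset.coe_union, Set.mem_union, Finset.mem_coe,
      goodF, centersF, Finset.mem_filter, Finset.mem_offDiag, Finset.mem_Icc,
      Finset.mem_insert, Finset.mem_singleton]
    constructor
    · rintro ⟨h1, h2, h3, h4⟩
      rcases Nat.eq_zero_or_pos p.1 with hz | hpos
      · right
        have h4' : r ≤ L p.2 := by rw [hz, hL0] at h4; linarith
        have := hLsmall p.2 h2 h4'
        obtain ⟨hA, hB⟩ := this
        have hp : p = (p.1, p.2) := rfl
        rw [hp, hz]
        interval_cases h : p.2 <;> decide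
      · rcases Nat.eq_zero_or_pos p.2 with hz2 | hpos2
        · right
          have h4' : r ≤ L p.1 := by rw [hz2, hL0] at h4; linarith
          have := hLsmall p.1 h1 h4'
          obtain ⟨hA, hB⟩ := this
          have hp : p = (p.1, p.2) := rfl
          rw [hp, hz2]
          interval_cases h : p.1 <;> decide
        · exact Or.inl ⟨⟨⟨hpos, h1⟩, ⟨hpos2, h2⟩, h3⟩, h4⟩
    · rintro (⟨⟨⟨ha, hb⟩, ⟨hc, hd⟩, he⟩, hf⟩ | h | h | h | h | h | h)
      · exact ⟨hb, hd, he, hf⟩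
      all_goals (rw [h]; refine ⟨by omega, by omega, by simp, ?_⟩)
      · simp only [hL0]; have := hLbig 1 le_rfl (by norm_num); linarith
      · simp only [hL0]; have := hLbig 2 (by norm_num) (by norm_num); linarith
      · simp only [hL0]; have := hLbig 3 (by norm_num) le_rfl; linarith
      · simp only [hL0]; have := hLbig 1 le_rfl (by norm_num); linarith
      · simp only [hL0]; have := hLbig 2 (by norm_num) (by norm_num); linarith
      · simp only [hL0]; have := hLbig 3 (by norm_num) le_rfl; linarith
  have h1 : Nat.card (ModelVertex k r L) = Set.ncard {p : ℕ × ℕ | IsModelVertex k r L p} :=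
    Nat.card_coe_set_eq _
  rw [h1, hset, Set.ncard_coe_finset]
  have hdisj : Disjoint (goodF k r L) centersF := by
    rw [Finset.disjoint_left]
    intro p hp hc
    simp only [goodF, Finset.mem_filter, Finset.mem_offDiag, Finset.mem_Icc] at hp
    fin_cases hc <;> omega
  rw [Finset.card_union_of_disjoint hdisj]
  congr 1

lemma DtF_card (k : ℕ) (hk : 4 ≤ k) : (DtF k).card = 3 * k - 3 := by
  classical
  have h1 : DtF k = ((Finset.Icc 1 3) ×ˢ (Finset.Icc 1 k)) \
      (((Finset.Icc 1 3) ×ˢ (Finset.Icc 1 k)).filter (fun p => p.1 = p.2)) := by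
    rw [DtF, ← Finset.filter_not]
  have h2 : ((Finset.Icc 1 3) ×ˢ (Finset.Icc 1 k)).filter (fun p => p.1 = p.2)
      = ({(1,1),(2,2),(3,3)} : Finset (ℕ × ℕ)) := by
    ext ⟨a, b⟩
    simp only [Finset.mem_filter, Finset.mem_product, Finset.mem_Icc, Finset.mem_insert,
      Finset.mem_singleton, Prod.mk.injEq]
    omega
  rw [h1, h2, Finset.card_sdiff_of_subset (by rw [← h2]; exact Finset.filter_subset _ _)]
  rw [Finset.card_product, Nat.card_Icc, Nat.card_Icc]
  have h3 : ({(1,1),(2,2),(3,3)} : Finset (ℕ × ℕ)).card = 3 := by decide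
  rw [h3]
  omega

lemma DfF_card (k : ℕ) (hk : 4 ≤ k) : (DfF k).card = 3 * k - 3 := by
  classical
  have h1 : DfF k = ((Finset.Icc 1 k) ×ˢ (Finset.Icc 1 3)) \
      (((Finset.Icc 1 k) ×ˢ (Finset.Icc 1 3)).filter (fun p => p.1 = p.2)) := by
    rw [DfF, ← Finset.filter_not]
  have h2 : ((Finset.Icc 1 k) ×ˢ (Finset.Icc 1 3)).filter (fun p => p.1 = p.2)
      = ({(1,1),(2,2),(3,3)} : Finset (ℕ × ℕ)) := by
    ext ⟨a, b⟩
    simp only [Finset.mem_filter, Finset.mem_product, Finset.mem_Icc, Finset.mem_insert,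
      Finset.mem_singleton, Prod.mk.injEq]
    omega
  rw [h1, h2, Finset.card_sdiff_of_subset (by rw [← h2]; exact Finset.filter_subset _ _)]
  rw [Finset.card_product, Nat.card_Icc, Nat.card_Icc]
  have h3 : ({(1,1),(2,2),(3,3)} : Finset (ℕ × ℕ)).card = 3 := by decide
  rw [h3]
  omega

lemma edge_card (k : ℕ) (hk : 4 ≤ k) (r : ℝ) (hr : 0 < r) (L : ℕ → ℝ)
    (hL0 : L 0 = 0) (hLpos : ∀ i, 1 ≤ i → i ≤ k → 0 < L i)
    (hmono : ∀ i j, 2 ≤ i → i ≤ j → j ≤ k → L j ≤ L i)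
    (hL4 : L 4 < r) (hL3 : r ≤ L 3) (hL1 : r ≤ L 1) :
    Nat.card (modelGraph k r L).edgeSet = 6 * (k - 1) := by
  classical
  have hLbig : ∀ x, 1 ≤ x → x ≤ 3 → r ≤ L x := by
    intro x h1 h3
    interval_cases x
    · exact hL1
    · exact le_trans hL3 (hmono 2 3 le_rfl (by norm_num) (by omega))
    · exact hL3
  have hLsmall : ∀ x, x ≤ k → r ≤ L x → 1 ≤ x ∧ x ≤ 3 := by
    intro x hxk hrx
    refine ⟨?_, ?_⟩
    · by_contra hc
      have : x = 0 := by omega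
      rw [this, hL0] at hrx; linarith
    · by_contra hc
      have : L x ≤ L 4 := hmono 4 x (by norm_num) (by omega) hxk
      linarith
  -- vertex builders
  have memDt : ∀ p ∈ DtF k, 1 ≤ p.1 ∧ p.1 ≤ 3 ∧ 1 ≤ p.2 ∧ p.2 ≤ k ∧ p.1 ≠ p.2 := by
    intro p hp
    simp only [DtF, Finset.mem_filter, Finset.mem_product, Finset.mem_Icc] at hp
    tauto
  have memDf : ∀ p ∈ DfF k, 1 ≤ p.1 ∧ p.1 ≤ k ∧ 1 ≤ p.2 ∧ p.2 ≤ 3 ∧ p.1 ≠ p.2 := by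
    intro p hp
    simp only [DfF, Finset.mem_filter, Finset.mem_product, Finset.mem_Icc] at hp
    tauto
  have vC1 : ∀ x, 1 ≤ x → x ≤ 3 → IsModelVertex k r L (x, 0) := by
    intro x h1 h3
    refine ⟨by omega, by omega, by omega, ?_⟩
    simp only [hL0]
    have := hLbig x h1 h3; linarith
  have vC2 : ∀ y, 1 ≤ y → y ≤ 3 → IsModelVertex k r L (0, y) := by
    intro y h1 h3
    refine ⟨by omega, by omega, by omega, ?_⟩
    simp only [hL0]
    have := hLbig y h1 h3; linarith
  have vL1 : ∀ x y, 1 ≤ x → x ≤ 3 → 1 ≤ y → y ≤ k → x ≠ y → IsModelVertex k r L (x, y) := by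
    intro x y h1 h3 hy1 hyk hxy
    refine ⟨by omega, hyk, hxy, ?_⟩
    have := hLbig x h1 h3
    have := hLpos y hy1 hyk
    linarith
  have vL2 : ∀ x y, 1 ≤ x → x ≤ k → 1 ≤ y → y ≤ 3 → x ≠ y → IsModelVertex k r L (x, y) := by
    intro x y h1 hxk hy1 hy3 hxy
    refine ⟨hxk, by omega, hxy, ?_⟩
    have := hLbig y hy1 hy3
    have := hLpos x h1 hxk
    linarith
  -- the bijection
  set G := modelGraph k r L with hG
  let ψ : (↥(DtF k) ⊕ ↥(DfF k)) → G.edgeSet := fun q =>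
    match q with
    | Sum.inl ⟨p, hp⟩ =>
      ⟨s(⟨(p.1, 0), vC1 p.1 (memDt p hp).1 (memDt p hp).2.1⟩,
        ⟨p, vL1 p.1 p.2 (memDt p hp).1 (memDt p hp).2.1 (memDt p hp).2.2.1
          (memDt p hp).2.2.2.1 (memDt p hp).2.2.2.2⟩),
        by
          refine (SimpleGraph.mem_edgeSet _).mpr ?_
          obtain ⟨h1, h2, h3, h4, h5⟩ := memDt p hp
          exact Or.inl ⟨rfl, Or.inl ⟨rfl, show p.2 ≠ 0 by omega⟩, hLbig p.1 h1 h2⟩⟩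
    | Sum.inr ⟨p, hp⟩ =>
      ⟨s(⟨(0, p.2), vC2 p.2 (memDf p hp).2.2.1 (memDf p hp).2.2.2.1⟩,
        ⟨p, vL2 p.1 p.2 (memDf p hp).1 (memDf p hp).2.1 (memDf p hp).2.2.1
          (memDf p hp).2.2.2.1 (memDf p hp).2.2.2.2⟩),
        by
          refine (SimpleGraph.mem_edgeSet _).mpr ?_
          obtain ⟨h1, h2, h3, h4, h5⟩ := memDf p hp
          exact Or.inr ⟨rfl, Or.inl ⟨rfl, show p.1 ≠ 0 by omega⟩, hLbig p.2 h3 h4⟩⟩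
  have hinj : Function.Injective ψ := by
    rintro (⟨p, hp⟩ | ⟨p, hp⟩) (⟨q, hq⟩ | ⟨q, hq⟩) h <;>
      have hval := Sym2.eq_iff.mp (Subtype.ext_iff.mp h)
    · obtain ⟨hp1, hp2, hp3, hp4, hp5⟩ := memDt p hp
      obtain ⟨hq1, hq2, hq3, hq4, hq5⟩ := memDt q hq
      rcases hval with ⟨ha, hb⟩ | ⟨ha, hb⟩
      · simp only [Sum.inl.injEq]
        exact Subtype.ext (show p = q from congrArg Subtype.val hb)
      · have ha' := congrArg Subtype.val ha
        have hb' := congrArg Subtype.val hb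
        simp only [Prod.ext_iff] at ha' hb'
        omega
    · obtain ⟨hp1, hp2, hp3, hp4, hp5⟩ := memDt p hp
      obtain ⟨hq1, hq2, hq3, hq4, hq5⟩ := memDf q hq
      exfalso
      rcases hval with ⟨ha, hb⟩ | ⟨ha, hb⟩ <;>
      · have ha' := congrArg Subtype.val ha
        have hb' := congrArg Subtype.val hb
        simp only [Prod.ext_iff] at ha' hb'
        omega
    · obtain ⟨hp1, hp2, hp3, hp4, hp5⟩ := memDf p hp
      obtain ⟨hq1, hq2, hq3, hq4, hq5⟩ := memDt q hq
      exfalso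
      rcases hval with ⟨ha, hb⟩ | ⟨ha, hb⟩ <;>
      · have ha' := congrArg Subtype.val ha
        have hb' := congrArg Subtype.val hb
        simp only [Prod.ext_iff] at ha' hb'
        omega
    · obtain ⟨hp1, hp2, hp3, hp4, hp5⟩ := memDf p hp
      obtain ⟨hq1, hq2, hq3, hq4, hq5⟩ := memDf q hq
      rcases hval with ⟨ha, hb⟩ | ⟨ha, hb⟩
      · simp only [Sum.inr.injEq]
        exact Subtype.ext (show p = q from congrArg Subtype.val hb)
      · have ha' := congrArg Subtype.val ha
        have hb' := congrArg Subtype.val hb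
        simp only [Prod.ext_iff] at ha' hb'
        omega
  have hsurj : Function.Surjective ψ := by
    rintro ⟨e, he⟩
    induction e with
    | h u v =>
      rw [SimpleGraph.mem_edgeSet] at he
      obtain ⟨hu1, hu2, hu3, hu4⟩ := u.2
      obtain ⟨hv1, hv2, hv3, hv4⟩ := v.2
      rcases he with ⟨h1, h2, h3⟩ | ⟨h1, h2, h3⟩
      · -- same first coordinate; centers are (x,0)
        have hx := hLsmall u.val.1 hu1 h3
        rcases h2 with ⟨hu0, hv0⟩ | ⟨hu0, hv0⟩
        · -- u is the center, v the leaf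
          have hvD : v.val ∈ DtF k := by
            simp only [DtF, Finset.mem_filter, Finset.mem_product, Finset.mem_Icc]
            omega
          refine ⟨Sum.inl ⟨v.val, hvD⟩, Subtype.ext (Sym2.eq_iff.mpr (Or.inl
            ⟨Subtype.ext ?_, Subtype.ext rfl⟩))⟩
          show ((v.val.1 : ℕ), (0 : ℕ)) = u.val
          rw [Prod.ext_iff]
          exact ⟨h1.symm, hu0.symm⟩
        · -- v is the center, u the leaf
          have huD : u.val ∈ DtF k := by
            simp only [DtF, Finset.mem_filter, Finset.mem_product, Finset.mem_Icc]
            omega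
          refine ⟨Sum.inl ⟨u.val, huD⟩, Subtype.ext (Sym2.eq_iff.mpr (Or.inr
            ⟨Subtype.ext ?_, Subtype.ext rfl⟩))⟩
          show ((u.val.1 : ℕ), (0 : ℕ)) = v.val
          rw [Prod.ext_iff]
          exact ⟨h1, hv0.symm⟩
      · have hy := hLsmall u.val.2 hu2 h3
        rcases h2 with ⟨hu0, hv0⟩ | ⟨hu0, hv0⟩
        · have hvD : v.val ∈ DfF k := by
            simp only [DfF, Finset.mem_filter, Finset.mem_product, Finset.mem_Icc]
            omega
          refine ⟨Sum.inr ⟨v.val, hvD⟩, Subtype.ext (Sym2.eq_iff.mpr (Or.inl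
            ⟨Subtype.ext ?_, Subtype.ext rfl⟩))⟩
          show ((0 : ℕ), (v.val.2 : ℕ)) = u.val
          rw [Prod.ext_iff]
          exact ⟨hu0.symm, h1.symm⟩
        · have huD : u.val ∈ DfF k := by
            simp only [DfF, Finset.mem_filter, Finset.mem_product, Finset.mem_Icc]
            omega
          refine ⟨Sum.inr ⟨u.val, huD⟩, Subtype.ext (Sym2.eq_iff.mpr (Or.inr
            ⟨Subtype.ext ?_, Subtype.ext rfl⟩))⟩
          show ((0 : ℕ), (u.val.2 : ℕ)) = v.val
          rw [Prod.ext_iff]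
          exact ⟨hv0.symm, h1⟩
  have hbij : Function.Bijective ψ := ⟨hinj, hsurj⟩
  have := Nat.card_eq_of_bijective ψ hbij
  rw [← this, Nat.card_sum, Nat.card_eq_fintype_card, Nat.card_eq_fintype_card,
    Fintype.card_coe, Fintype.card_coe, DtF_card k hk, DfF_card k hk]
  omega

lemma comp_card (k : ℕ) (hk : 4 ≤ k) (r : ℝ) (hr : 0 < r) (L : ℕ → ℝ)
    (hL0 : L 0 = 0) (hLpos : ∀ i, 1 ≤ i → i ≤ k → 0 < L i)
    (hmono : ∀ i j, 2 ≤ i → i ≤ j → j ≤ k → L j ≤ L i)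
    (hL4 : L 4 < r) (hL3 : r ≤ L 3) (hL1 : r ≤ L 1) :
    Nat.card (modelGraph k r L).ConnectedComponent = (isoF k r L).card + 1 := by
  classical
  have hLbig : ∀ x, 1 ≤ x → x ≤ 3 → r ≤ L x := by
    intro x h1 h3
    interval_cases x
    · exact hL1
    · exact le_trans hL3 (hmono 2 3 le_rfl (by norm_num) (by omega))
    · exact hL3
  have hLsmall : ∀ x, x ≤ k → r ≤ L x → 1 ≤ x ∧ x ≤ 3 := by
    intro x hxk hrx
    refine ⟨?_, ?_⟩
    · by_contra hc
      have : x = 0 := by omega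
      rw [this, hL0] at hrx; linarith
    · by_contra hc
      have : L x ≤ L 4 := hmono 4 x (by norm_num) (by omega) hxk
      linarith
  set G := modelGraph k r L with hG
  let V : Type := ModelVertex k r L
  -- vertex builders
  have vC1 : ∀ x, 1 ≤ x → x ≤ 3 → IsModelVertex k r L (x, 0) := by
    intro x h1 h3
    refine ⟨by omega, by omega, by omega, ?_⟩
    simp only [hL0]
    have := hLbig x h1 h3; linarith
  have vC2 : ∀ y, 1 ≤ y → y ≤ 3 → IsModelVertex k r L (0, y) := by
    intro y h1 h3
    refine ⟨by omega, by omega, by omega, ?_⟩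
    simp only [hL0]
    have := hLbig y h1 h3; linarith
  have vLf : ∀ x y, 1 ≤ x → x ≤ 3 → 1 ≤ y → y ≤ 3 → x ≠ y → IsModelVertex k r L (x, y) := by
    intro x y h1 h3 hy1 hy3 hxy
    refine ⟨by omega, by omega, hxy, ?_⟩
    have := hLbig x h1 h3
    have := hLpos y hy1 (by omega)
    linarith
  let C1 : (x : ℕ) → 1 ≤ x → x ≤ 3 → V := fun x h1 h3 => ⟨(x, 0), vC1 x h1 h3⟩
  let C2 : (y : ℕ) → 1 ≤ y → y ≤ 3 → V := fun y h1 h3 => ⟨(0, y), vC2 y h1 h3⟩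
  let v0 : V := C1 1 le_rfl (by norm_num)
  have hadjC1 : ∀ (x : ℕ) (h1 : 1 ≤ x) (h3 : x ≤ 3) (v : V),
      v.val.1 = x → v.val.2 ≠ 0 → G.Adj (C1 x h1 h3) v := by
    intro x h1 h3 v hv1 hv2
    exact Or.inl ⟨hv1.symm, Or.inl ⟨rfl, hv2⟩, hLbig x h1 h3⟩
  have hadjC2 : ∀ (y : ℕ) (h1 : 1 ≤ y) (h3 : y ≤ 3) (v : V),
      v.val.2 = y → v.val.1 ≠ 0 → G.Adj (C2 y h1 h3) v := by
    intro y h1 h3 v hv1 hv2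
    exact Or.inr ⟨hv1.symm, Or.inl ⟨rfl, hv2⟩, hLbig y h1 h3⟩
  -- leaves used to connect the centers
  let l12 : V := ⟨(1, 2), vLf 1 2 (by norm_num) (by norm_num) (by norm_num) (by norm_num) (by norm_num)⟩
  let l13 : V := ⟨(1, 3), vLf 1 3 (by norm_num) (by norm_num) (by norm_num) (by norm_num) (by norm_num)⟩
  let l32 : V := ⟨(3, 2), vLf 3 2 (by norm_num) (by norm_num) (by norm_num) (by norm_num) (by norm_num)⟩
  let l23 : V := ⟨(2, 3), vLf 2 3 (by norm_num) (by norm_num) (by norm_num) (by norm_num) (by norm_num)⟩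
  let l21 : V := ⟨(2, 1), vLf 2 1 (by norm_num) (by norm_num) (by norm_num) (by norm_num) (by norm_num)⟩
  have r02 : G.Reachable v0 (C2 2 (by norm_num) (by norm_num)) :=
    (hadjC1 1 le_rfl (by norm_num) l12 rfl (by norm_num)).reachable.trans
      (hadjC2 2 (by norm_num) (by norm_num) l12 rfl (by norm_num)).reachable.symm
  have r03 : G.Reachable v0 (C2 3 (by norm_num) (by norm_num)) :=
    (hadjC1 1 le_rfl (by norm_num) l13 rfl (by norm_num)).reachable.trans
      (hadjC2 3 (by norm_num) (by norm_num) l13 rfl (by norm_num)).reachable.symm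
  have r30 : G.Reachable v0 (C1 3 (by norm_num) (by norm_num)) :=
    r02.trans ((hadjC2 2 (by norm_num) (by norm_num) l32 rfl (by norm_num)).reachable.trans
      (hadjC1 3 (by norm_num) (by norm_num) l32 rfl (by norm_num)).reachable.symm)
  have r20 : G.Reachable v0 (C1 2 (by norm_num) (by norm_num)) :=
    r03.trans ((hadjC2 3 (by norm_num) (by norm_num) l23 rfl (by norm_num)).reachable.trans
      (hadjC1 2 (by norm_num) (by norm_num) l23 rfl (by norm_num)).reachable.symm)
  have r01 : G.Reachable v0 (C2 1 (by norm_num) (by norm_num)) :=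
    r20.trans ((hadjC1 2 (by norm_num) (by norm_num) l21 rfl (by norm_num)).reachable.trans
      (hadjC2 1 (by norm_num) (by norm_num) l21 rfl (by norm_num)).reachable.symm)
  have hcen1 : ∀ (x : ℕ) (h1 : 1 ≤ x) (h3 : x ≤ 3), G.Reachable v0 (C1 x h1 h3) := by
    intro x h1 h3
    interval_cases x
    · exact SimpleGraph.Reachable.refl _
    · exact r20
    · exact r30
  have hcen2 : ∀ (y : ℕ) (h1 : 1 ≤ y) (h3 : y ≤ 3), G.Reachable v0 (C2 y h1 h3) := by
    intro y h1 h3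
    interval_cases y
    · exact r01
    · exact r02
    · exact r03
  -- "big" vertices
  set Big : ℕ × ℕ → Prop := fun p => (1 ≤ p.1 ∧ p.1 ≤ 3) ∨ (1 ≤ p.2 ∧ p.2 ≤ 3) with hBig
  have hAdjBig : ∀ u v : V, G.Adj u v → Big u.val ∧ Big v.val := by
    intro u v huv
    have huv' : ModelAdj r L u.val v.val := huv
    rcases huv' with ⟨h1, h2, h3⟩ | ⟨h1, h2, h3⟩
    · have := hLsmall u.val.1 u.2.1 h3
      exact ⟨Or.inl this, Or.inl (h1 ▸ this)⟩
    · have := hLsmall u.val.2 u.2.2.1 h3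
      exact ⟨Or.inr this, Or.inr (h1 ▸ this)⟩
  have hreach : ∀ v : V, Big v.val → G.Reachable v0 v := by
    intro v hb
    rcases hb with ⟨h1, h3⟩ | ⟨h1, h3⟩
    · by_cases hz : v.val.2 = 0
      · have hve : v = C1 v.val.1 h1 h3 := by
          apply Subtype.ext
          rw [show (C1 v.val.1 h1 h3).val = (v.val.1, 0) from rfl, Prod.ext_iff]
          exact ⟨rfl, hz⟩
        rw [hve]
        exact hcen1 v.val.1 h1 h3
      · exact (hcen1 v.val.1 h1 h3).trans (hadjC1 v.val.1 h1 h3 v rfl hz).reachable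
    · by_cases hz : v.val.1 = 0
      · have hve : v = C2 v.val.2 h1 h3 := by
          apply Subtype.ext
          rw [show (C2 v.val.2 h1 h3).val = (0, v.val.2) from rfl, Prod.ext_iff]
          exact ⟨hz, rfl⟩
        rw [hve]
        exact hcen2 v.val.2 h1 h3
      · exact (hcen2 v.val.2 h1 h3).trans (hadjC2 v.val.2 h1 h3 v rfl hz).reachable
  -- the labelling function
  let f : V → ℕ × ℕ := fun v => if Big v.val then (1, 0) else v.val
  have hwalk : ∀ (u v : V) (p : G.Walk u v), f u = f v := by
    intro u v p
    induction p with
    | nil => rfl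
    | cons h q ih =>
      have hb := hAdjBig _ _ h
      show (if Big _ then _ else _) = _
      rw [if_pos hb.1, ← ih]
      show _ = (if Big _ then _ else _)
      rw [if_pos hb.2]
  let F : G.ConnectedComponent → ℕ × ℕ :=
    SimpleGraph.ConnectedComponent.lift f (fun u v p _ => hwalk u v p)
  have hFmk : ∀ v : V, F (G.connectedComponentMk v) = f v := fun _ => rfl
  have hnotbig : ∀ v : V, ¬ Big v.val → 4 ≤ v.val.1 ∧ v.val.1 ≤ k ∧ 4 ≤ v.val.2 ∧ v.val.2 ≤ k := by
    intro v hnb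
    rw [hBig] at hnb
    push_neg at hnb
    obtain ⟨hv1, hv2, hv3, hv4⟩ := v.2
    refine ⟨?_, hv1, ?_, hv2⟩
    · rcases Nat.eq_zero_or_pos v.val.1 with hz | hp
      · exfalso
        have h4' : r ≤ L v.val.2 := by
          rw [hz, hL0] at hv4; linarith
        have := hLsmall v.val.2 hv2 h4'
        omega
      · omega
    · rcases Nat.eq_zero_or_pos v.val.2 with hz | hp
      · exfalso
        have h4' : r ≤ L v.val.1 := by
          rw [hz, hL0] at hv4; linarith
        have := hLsmall v.val.1 hv1 h4'
        omega
      · omega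
  set T : Finset (ℕ × ℕ) := insert (1, 0) (isoF k r L) with hT
  have hmemT : ∀ c : G.ConnectedComponent, F c ∈ T := by
    intro c
    induction c using SimpleGraph.ConnectedComponent.ind with
    | _ v =>
      rw [hFmk]
      by_cases hb : Big v.val
      · rw [show f v = (1, 0) from if_pos hb]
        exact Finset.mem_insert_self _ _
      · rw [show f v = v.val from if_neg hb]
        apply Finset.mem_insert_of_mem
        have h4 := hnotbig v hb
        obtain ⟨hv1, hv2, hv3, hv4⟩ := v.2
        simp only [isoF, Finset.mem_filter, Finset.mem_offDiag, Finset.mem_Icc]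
        exact ⟨⟨⟨h4.1, h4.2.1⟩, ⟨h4.2.2.1, h4.2.2.2⟩, hv3⟩, hv4⟩
  have hinj : Function.Injective F := by
    have key : ∀ u v : V, F (G.connectedComponentMk u) = F (G.connectedComponentMk v) →
        G.connectedComponentMk u = G.connectedComponentMk v := by
      intro u v h
      rw [hFmk, hFmk] at h
      by_cases b1 : Big u.val <;> by_cases b2 : Big v.val
      · exact SimpleGraph.ConnectedComponent.sound ((hreach u b1).symm.trans (hreach v b2))
      · exfalso
        rw [show f u = (1,0) from if_pos b1, show f v = v.val from if_neg b2] at h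
        have := hnotbig v b2
        rw [Prod.ext_iff] at h
        omega
      · exfalso
        rw [show f v = (1,0) from if_pos b2, show f u = u.val from if_neg b1] at h
        have := hnotbig u b1
        rw [Prod.ext_iff] at h
        omega
      · rw [show f u = u.val from if_neg b1, show f v = v.val from if_neg b2] at h
        rw [Subtype.ext h]
    intro c d h
    obtain ⟨u, rfl⟩ := Quot.exists_rep c
    obtain ⟨v, rfl⟩ := Quot.exists_rep d
    exact key u v h
  have hsurjT : ∀ t ∈ T, ∃ c : G.ConnectedComponent, F c = t := by
    intro t ht
    rw [hT, Finset.mem_insert] at ht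
    rcases ht with h | h
    · refine ⟨G.connectedComponentMk v0, ?_⟩
      rw [hFmk, show f v0 = (1, 0) from if_pos (Or.inl ⟨le_rfl, by norm_num⟩), h]
    · simp only [isoF, Finset.mem_filter, Finset.mem_offDiag, Finset.mem_Icc] at h
      obtain ⟨⟨⟨h1, h2⟩, ⟨h3, h4⟩, h5⟩, h6⟩ := h
      have hvt : IsModelVertex k r L t := ⟨h2, h4, h5, h6⟩
      refine ⟨G.connectedComponentMk ⟨t, hvt⟩, ?_⟩
      refine (hFmk _).trans ?_
      exact if_neg (by rw [hBig]; push_neg; simp only; omega)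
  -- conclude
  let F' : G.ConnectedComponent → ↥T := fun c => ⟨F c, hmemT c⟩
  have hbij : Function.Bijective F' := by
    constructor
    · intro c d h
      exact hinj (congrArg Subtype.val h)
    · rintro ⟨t, ht⟩
      obtain ⟨c, hc⟩ := hsurjT t ht
      exact ⟨c, Subtype.ext hc⟩
  have hnm : ((1 : ℕ), (0 : ℕ)) ∉ isoF k r L := by
    simp only [isoF, Finset.mem_filter, Finset.mem_offDiag, Finset.mem_Icc]
    omega
  rw [Nat.card_eq_of_bijective F' hbij, Nat.card_eq_fintype_card, Fintype.card_coe, hT,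
    Finset.card_insert_of_notMem hnm]

/-- if `4 ≤ k`, `L 2 ≥ ⋯ ≥ L k`, `L 4 < r ≤ L 3` and `r ≤ L 1`, then
`(G_k)_{r,L}` has `k(k−1) + 6 − 2h` vertices, `6(k−1)` edges and `(k−3)(k−4) + 1 − 2h`
connected components; in particular `e − v + c = 1`. -/
theorem model_counts_middle (k : ℕ) (hk : 4 ≤ k) (r : ℝ) (hr : 0 < r) (L : ℕ → ℝ)
    (hL0 : L 0 = 0) (hLpos : ∀ i, 1 ≤ i → i ≤ k → 0 < L i)
    (hmono : ∀ i j, 2 ≤ i → i ≤ j → j ≤ k → L j ≤ L i)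
    (hL4 : L 4 < r) (hL3 : r ≤ L 3) (hL1 : r ≤ L 1) :
    (Nat.card (ModelVertex k r L) : ℤ)
        = (k : ℤ) * ((k : ℤ) - 1) + 6 - 2 * (pairCount k r L : ℤ) ∧
    Nat.card (modelGraph k r L).edgeSet = 6 * (k - 1) ∧
    (Nat.card (modelGraph k r L).ConnectedComponent : ℤ)
        = ((k : ℤ) - 3) * ((k : ℤ) - 4) + 1 - 2 * (pairCount k r L : ℤ) ∧
    (Nat.card (modelGraph k r L).edgeSet : ℤ) - (Nat.card (ModelVertex k r L) : ℤ)
      + (Nat.card (modelGraph k r L).ConnectedComponent : ℤ) = 1 := by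
  classical
  have hv := vertex_card k hk r hr L hL0 hLpos hmono hL4 hL3 hL1
  have he := edge_card k hk r hr L hL0 hLpos hmono hL4 hL3 hL1
  have hc := comp_card k hk r hr L hL0 hLpos hmono hL4 hL3 hL1
  have hgb := good_add_bad k (by omega) r L
  have hib := iso_add_bad k hk r hr L hL0 hLpos hmono hL4 hL3 hL1
  have hbad := badF_card_eq k r L
  have hkk : k ≤ k * k := Nat.le_mul_of_pos_left k (by omega)
  have hk3 : (k - 3) ≤ (k - 3) * (k - 3) := Nat.le_mul_of_pos_left _ (by omega)
  have hgb' : (goodF k r L).card + 2 * pairCount k r L = k * k - k := by omega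
  have hib' : (isoF k r L).card + 2 * pairCount k r L = (k - 3) * (k - 3) - (k - 3) := by omega
  have hgbZ : ((goodF k r L).card : ℤ) + 2 * (pairCount k r L : ℤ)
      = (k : ℤ) * k - k := by
    have := congrArg (Nat.cast (R := ℤ)) hgb'
    push_cast [Nat.cast_sub hkk] at this
    linarith
  have hibZ : ((isoF k r L).card : ℤ) + 2 * (pairCount k r L : ℤ)
      = ((k : ℤ) - 3) * ((k : ℤ) - 3) - ((k : ℤ) - 3) := by
    have := congrArg (Nat.cast (R := ℤ)) hib'
    have hc3 : ((k - 3 : ℕ) : ℤ) = (k : ℤ) - 3 := by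
      push_cast [Nat.cast_sub (by omega : 3 ≤ k)]; ring
    push_cast [Nat.cast_sub hk3, hc3] at this
    linarith
  have Hv : (Nat.card (ModelVertex k r L) : ℤ)
      = (k : ℤ) * ((k : ℤ) - 1) + 6 - 2 * (pairCount k r L : ℤ) := by
    rw [hv]
    push_cast
    have e2 : (k : ℤ) * ((k : ℤ) - 1) = (k : ℤ) * k - k := by ring
    linarith [hgbZ, e2]
  have Hc : (Nat.card (modelGraph k r L).ConnectedComponent : ℤ)
      = ((k : ℤ) - 3) * ((k : ℤ) - 4) + 1 - 2 * (pairCount k r L : ℤ) := by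
    rw [hc]
    push_cast
    have e1 : ((k : ℤ) - 3) * ((k : ℤ) - 4) = ((k : ℤ) - 3) * ((k : ℤ) - 3) - ((k : ℤ) - 3) := by
      ring
    linarith [hibZ, e1]
  refine ⟨Hv, he, Hc, ?_⟩
  rw [Hv, Hc, he]
  have h1k : (1 : ℕ) ≤ k := by omega
  push_cast [Nat.cast_sub h1k]
  ring
end

section
/- Let k ≥ 4 and let 0 < r ≤ r'. Assume that for every i ∈ {1,…,k} one has (L_i ≥ r ⟺ L_i ≥ r'), and that for every i ∈ {2,…,k} one has (L_1 + L_i ≥ r ⟺ L_1 + L_i ≥ r'). Then e((G_k)_{r,L}) − v((G_k)_{r,L}) + c((G_k)_{r,L}) = e((G_k)_{r',L}) − v((G_k)_{r',L}) + c((G_k)_{r',L}). -/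
instance ModelVertex.finite (k : ℕ) (r : ℝ) (L : ℕ → ℝ) : Finite (ModelVertex k r L) := by
  apply Finite.of_injective
    (fun v : ModelVertex k r L =>
      ((⟨v.val.1, Nat.lt_succ_of_le v.prop.1⟩ : Fin (k + 1)),
       (⟨v.val.2, Nat.lt_succ_of_le v.prop.2.1⟩ : Fin (k + 1))))
  intro a b h
  apply Subtype.ext
  have h1 := congrArg (fun p : Fin (k + 1) × Fin (k + 1) => p.1.val) h
  have h2 := congrArg (fun p : Fin (k + 1) × Fin (k + 1) => p.2.val) h
  exact Prod.ext h1 h2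

open SimpleGraph Function in
private lemma reachable_pull {V W : Type*} {G : SimpleGraph V} {H : SimpleGraph W}
    {f : W → V} (finj : Injective f)
    (hadj : ∀ a b, H.Adj a b ↔ G.Adj (f a) (f b))
    (hiso : ∀ v, v ∉ Set.range f → ∀ w, ¬ G.Adj v w)
    {v w : V} (p : G.Walk v w) :
    ∀ a b : W, f a = v → f b = w → H.Reachable a b := by
  induction p with
  | nil =>
    intro a b ha hb
    cases finj (ha.trans hb.symm)
    exact Reachable.refl a
  | @cons u x y h p ih =>
    intro a b ha hb
    have hx : x ∈ Set.range f := by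
      by_contra hx
      exact hiso x hx u h.symm
    obtain ⟨a', ha'⟩ := hx
    have : H.Adj a a' := (hadj a a').mpr (by rw [ha, ha']; exact h)
    exact this.reachable.trans (ih a' b ha' hb)

open SimpleGraph Function in
private lemma isolated_reachable {V : Type*} {G : SimpleGraph V} {v w : V}
    (hiso : ∀ w, ¬ G.Adj v w) (h : G.Reachable v w) : v = w := by
  obtain ⟨p⟩ := h
  cases p with
  | nil => rfl
  | cons h' _ => exact absurd h' (hiso _)

open SimpleGraph Function in
private lemma euler_aux {V W : Type*} [Finite V] [Finite W]
    (G : SimpleGraph V) (H : SimpleGraph W) (f : W → V) (finj : Injective f)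
    (hadj : ∀ a b, H.Adj a b ↔ G.Adj (f a) (f b))
    (hiso : ∀ v, v ∉ Set.range f → ∀ w, ¬ G.Adj v w) :
    (Nat.card G.edgeSet : ℤ) - (Nat.card V : ℤ) + (Nat.card G.ConnectedComponent : ℤ)
      = (Nat.card H.edgeSet : ℤ) - (Nat.card W : ℤ) + (Nat.card H.ConnectedComponent : ℤ) := by
  classical
  set T := {v : V // v ∉ Set.range f} with hT
  let φ : H →g G := ⟨f, fun h => (hadj _ _).mp h⟩
  -- vertex count
  have hv : Nat.card V = Nat.card W + Nat.card T := by
    have e1 : V ≃ {v : V // v ∈ Set.range f} ⊕ T :=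
      (Equiv.sumCompl (fun v => v ∈ Set.range f)).symm
    have e2 : {v : V // v ∈ Set.range f} ≃ W := (Equiv.ofInjective f finj).symm
    rw [Nat.card_congr e1, Nat.card_sum, Nat.card_congr e2]
  -- edge count
  have he : Nat.card H.edgeSet = Nat.card G.edgeSet := by
    apply Nat.card_eq_of_bijective (Hom.mapEdgeSet φ)
    constructor
    · exact Hom.mapEdgeSet.injective φ finj
    · rintro ⟨e, he⟩
      induction e with
      | h u w =>
        rw [mem_edgeSet] at he
        have hu : u ∈ Set.range f := by
          by_contra h; exact hiso u h w he
        have hw : w ∈ Set.range f := by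
          by_contra h; exact hiso w h u he.symm
        obtain ⟨a, rfl⟩ := hu
        obtain ⟨b, rfl⟩ := hw
        refine ⟨⟨s(a, b), (mem_edgeSet H).mpr ((hadj a b).mpr he)⟩, ?_⟩
        simp only [Hom.mapEdgeSet, Sym2.map_pair_eq, Subtype.mk.injEq, Sym2.eq,
          Sym2.rel_iff', Prod.mk.injEq, Prod.swap_prod_mk]
        exact Or.inl ⟨rfl, rfl⟩
  -- component count
  have hc : Nat.card H.ConnectedComponent + Nat.card T = Nat.card G.ConnectedComponent := by
    rw [← Nat.card_sum]
    apply Nat.card_eq_of_bijective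
      (Sum.elim (ConnectedComponent.map φ) (fun t : T => G.connectedComponentMk t.val))
    constructor
    · rintro (c | ⟨t, ht⟩) (d | ⟨s, hs⟩) hcd
      · obtain ⟨a, rfl⟩ := c.exists_rep
        obtain ⟨b, rfl⟩ := d.exists_rep
        change G.connectedComponentMk (f a) = G.connectedComponentMk (f b) at hcd
        have : H.Reachable a b := by
          obtain ⟨p⟩ := ConnectedComponent.exact hcd
          exact reachable_pull finj hadj hiso p a b rfl rfl
        exact congrArg Sum.inl (ConnectedComponent.sound this)
      · obtain ⟨a, rfl⟩ := c.exists_rep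
        simp only [Sum.elim_inl, Sum.elim_inr, ConnectedComponent.map_mk] at hcd
        have := isolated_reachable (hiso s hs) (ConnectedComponent.exact hcd).symm
        exact absurd ⟨a, this.symm⟩ hs
      · obtain ⟨b, rfl⟩ := d.exists_rep
        simp only [Sum.elim_inl, Sum.elim_inr, ConnectedComponent.map_mk] at hcd
        have := isolated_reachable (hiso t ht) (ConnectedComponent.exact hcd)
        exact absurd ⟨b, this.symm⟩ ht
      · simp only [Sum.elim_inr] at hcd
        have := isolated_reachable (hiso t ht) (ConnectedComponent.exact hcd)
        exact congrArg Sum.inr (Subtype.ext this)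
    · intro c
      obtain ⟨v, rfl⟩ := c.exists_rep
      by_cases hv : v ∈ Set.range f
      · obtain ⟨a, rfl⟩ := hv
        refine ⟨Sum.inl (H.connectedComponentMk a), ?_⟩
        simp only [Sum.elim_inl, ConnectedComponent.map_mk]
        rfl
      · exact ⟨Sum.inr ⟨v, hv⟩, rfl⟩
  rw [hv, ← he, ← hc]
  push_cast
  ring

/-- if `4 ≤ k`, `0 < r ≤ r'`, and neither any threshold `L i ≥ r`
(`i ∈ {1,…,k}`) nor any threshold `L 1 + L i ≥ r` (`i ∈ {2,…,k}`) changes between `r`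
and `r'`, then `e − v + c` is the same for `(G_k)_{r,L}` and `(G_k)_{r',L}`. -/
theorem model_euler_invariant_r (k : ℕ) (hk : 4 ≤ k) (r r' : ℝ) (hr : 0 < r) (hrr' : r ≤ r')
    (L : ℕ → ℝ) (hL0 : L 0 = 0) (hLpos : ∀ i, 1 ≤ i → i ≤ k → 0 < L i)
    (hthr1 : ∀ i, 1 ≤ i → i ≤ k → (r ≤ L i ↔ r' ≤ L i))
    (hthr2 : ∀ i, 2 ≤ i → i ≤ k → (r ≤ L 1 + L i ↔ r' ≤ L 1 + L i)) :
    (Nat.card (modelGraph k r L).edgeSet : ℤ) - (Nat.card (ModelVertex k r L) : ℤ)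
      + (Nat.card (modelGraph k r L).ConnectedComponent : ℤ)
    = (Nat.card (modelGraph k r' L).edgeSet : ℤ) - (Nat.card (ModelVertex k r' L) : ℤ)
      + (Nat.card (modelGraph k r' L).ConnectedComponent : ℤ) := by
  -- threshold invariance for single coordinates
  have thr : ∀ x : ℕ, x ≤ k → (r ≤ L x ↔ r' ≤ L x) := by
    intro x hx
    rcases Nat.eq_zero_or_pos x with rfl | hx1
    · rw [hL0]; constructor <;> intro h <;> linarith
    · exact hthr1 x hx1 hx
  have hLnn : ∀ x : ℕ, x ≤ k → 0 ≤ L x := by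
    intro x hx
    rcases Nat.eq_zero_or_pos x with rfl | hx1
    · rw [hL0]
    · exact (hLpos x hx1 hx).le
  -- any vertex of the r-graph incident to an edge is a vertex of the r'-graph
  have key : ∀ a b : ℕ × ℕ, a.1 ≤ k → a.2 ≤ k → a.1 ≠ a.2 → ModelAdj r L a b →
      IsModelVertex k r' L a := by
    intro a b ha1 ha2 hane hadj
    refine ⟨ha1, ha2, hane, ?_⟩
    rcases hadj with ⟨_, _, h3⟩ | ⟨_, _, h3⟩
    · have := (thr a.1 ha1).mp h3
      have := hLnn a.2 ha2
      linarith
    · have := (thr a.2 ha2).mp h3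
      have := hLnn a.1 ha1
      linarith
  -- the embedding of the r'-vertices into the r-vertices
  let f : ModelVertex k r' L → ModelVertex k r L := fun v =>
    ⟨v.val, v.prop.1, v.prop.2.1, v.prop.2.2.1, le_trans hrr' v.prop.2.2.2⟩
  have finj : Function.Injective f := by
    intro a b h
    apply Subtype.ext
    exact congrArg (fun x : ModelVertex k r L => x.val) h
  have hrange : ∀ v : ModelVertex k r L,
      v ∈ Set.range f ↔ IsModelVertex k r' L v.val := by
    intro v
    constructor
    · rintro ⟨a, rfl⟩; exact a.prop
    · intro h; exact ⟨⟨v.val, h⟩, Subtype.ext rfl⟩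
  refine euler_aux (modelGraph k r L) (modelGraph k r' L) f finj ?_ ?_
  · -- adjacency agrees
    intro a b
    show ModelAdj r' L a.val b.val ↔ ModelAdj r L a.val b.val
    unfold ModelAdj
    rw [thr a.val.1 a.prop.1, thr a.val.2 a.prop.2.1]
  · -- vertices outside the range are isolated
    intro v hv w hadj
    have : IsModelVertex k r' L v.val :=
      key v.val w.val v.prop.1 v.prop.2.1 v.prop.2.2.1 hadj
    exact hv ((hrange v).mpr this)
end

section
/- Let k ≥ 4 and r > 0, and let L = (L_1, L_2, …, L_k) and L' = (L_1', L_2, …, L_k) be tuples of positive reals that agree in all coordinates except possibly the first. If L_1 < r and L_1' < r, then e((G_k)_{r,L}) − v((G_k)_{r,L}) + c((G_k)_{r,L}) = e((G_k)_{r,L'}) − v((G_k)_{r,L'}) + c((G_k)_{r,L'}). -/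
open SimpleGraph

section General
variable {V : Type*}

/-- The induced graph on the support of `G`. -/
def suppGraph (G : SimpleGraph V) : SimpleGraph ↥G.support :=
  G.comap Subtype.val

lemma supp_reachable_lift (G : SimpleGraph V) {v u : V} (w : G.Walk v u) :
    ∀ (hv : v ∈ G.support) (hu : u ∈ G.support),
      (suppGraph G).Reachable ⟨v, hv⟩ ⟨u, hu⟩ := by
  induction w with
  | nil => intro hv hu; exact Reachable.refl _
  | @cons a b c h p ih =>
      intro hv hu
      have hb : b ∈ G.support := ⟨a, h.symm⟩
      exact (SimpleGraph.Adj.reachable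
        (show (suppGraph G).Adj ⟨a, hv⟩ ⟨b, hb⟩ from h)).trans (ih hb hu)

lemma isolated_reach (G : SimpleGraph V) {v u : V} (hv : v ∉ G.support)
    (h : G.Reachable v u) : v = u := by
  obtain ⟨w⟩ := h
  cases w with
  | nil => rfl
  | cons h p => exact absurd ⟨_, h⟩ hv

lemma card_cc (G : SimpleGraph V) [Finite V] :
    Nat.card G.ConnectedComponent
      = Nat.card (suppGraph G).ConnectedComponent + Nat.card {v : V // v ∉ G.support} := by
  classical
  rw [← Nat.card_sum]
  refine Nat.card_congr (Equiv.ofBijective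
    (Sum.elim (ConnectedComponent.map (SimpleGraph.Hom.comap Subtype.val G))
      (fun v => G.connectedComponentMk v.1)) ⟨?_, ?_⟩).symm
  · rintro (c | v) (d | w) h
    · obtain ⟨a, rfl⟩ := c.exists_rep
      obtain ⟨b, rfl⟩ := d.exists_rep
      change G.connectedComponentMk a.1 = G.connectedComponentMk b.1 at h
      have hr : G.Reachable a.1 b.1 := ConnectedComponent.exact h
      obtain ⟨wlk⟩ := hr
      exact congrArg Sum.inl (ConnectedComponent.sound (supp_reachable_lift G wlk a.2 b.2))
    · obtain ⟨a, rfl⟩ := c.exists_rep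
      simp only [Sum.elim_inl, Sum.elim_inr, ConnectedComponent.map_mk] at h
      have hr : G.Reachable w.1 a.1 := (ConnectedComponent.exact h).symm
      exact absurd ((isolated_reach G w.2 hr) ▸ a.2) w.2
    · obtain ⟨a, rfl⟩ := d.exists_rep
      simp only [Sum.elim_inl, Sum.elim_inr, ConnectedComponent.map_mk] at h
      have hr : G.Reachable v.1 a.1 := ConnectedComponent.exact h
      exact absurd ((isolated_reach G v.2 hr) ▸ a.2) v.2
    · simp only [Sum.elim_inr] at h
      have hr : G.Reachable v.1 w.1 := ConnectedComponent.exact h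
      exact congrArg Sum.inr (Subtype.ext (isolated_reach G v.2 hr))
  · intro c
    obtain ⟨v, rfl⟩ := c.exists_rep
    by_cases hv : v ∈ G.support
    · exact ⟨Sum.inl ((suppGraph G).connectedComponentMk ⟨v, hv⟩), by
        rfl⟩
    · exact ⟨Sum.inr ⟨v, hv⟩, rfl⟩

lemma card_edge (G : SimpleGraph V) [Finite V] :
    Nat.card G.edgeSet = Nat.card (suppGraph G).edgeSet := by
  let emb : (suppGraph G) ↪g G :=
    SimpleGraph.Embedding.comap (Function.Embedding.subtype _) G
  refine (Nat.card_congr (Equiv.ofBijective emb.mapEdgeSet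
    ⟨emb.mapEdgeSet.injective, ?_⟩)).symm
  rintro ⟨e, he⟩
  induction e using Sym2.ind with
  | _ a b =>
    have hab : G.Adj a b := he
    have ha : a ∈ G.support := ⟨b, hab⟩
    have hb : b ∈ G.support := ⟨a, hab.symm⟩
    refine ⟨⟨s(⟨a, ha⟩, ⟨b, hb⟩), hab⟩, ?_⟩
    apply Subtype.ext
    simp [Embedding.mapEdgeSet, Hom.mapEdgeSet, Sym2.map_pair_eq]
    exact Or.inl ⟨rfl, rfl⟩

lemma card_verts (G : SimpleGraph V) [Finite V] :
    Nat.card V = Nat.card ↥G.support + Nat.card {v : V // v ∉ G.support} := by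
  classical
  rw [← Nat.card_sum]
  exact (Nat.card_congr (Equiv.sumCompl (· ∈ G.support))).symm

lemma euler_eq {V V' : Type*} [Finite V] [Finite V'] (G : SimpleGraph V) (G' : SimpleGraph V')
    (φ : ↥G.support ≃ ↥G'.support)
    (hφ : ∀ a b : ↥G.support, G.Adj a.1 b.1 ↔ G'.Adj (φ a).1 (φ b).1) :
    (Nat.card G.edgeSet : ℤ) - Nat.card V + Nat.card G.ConnectedComponent
      = (Nat.card G'.edgeSet : ℤ) - Nat.card V' + Nat.card G'.ConnectedComponent := by
  have iso : suppGraph G ≃g suppGraph G' :=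
    { toEquiv := φ, map_rel_iff' := fun {a b} => (hφ a b).symm }
  have he : Nat.card G.edgeSet = Nat.card G'.edgeSet := by
    rw [card_edge G, card_edge G']
    exact Nat.card_congr iso.mapEdgeSet
  have hs : Nat.card ↥G.support = Nat.card ↥G'.support := Nat.card_congr φ
  have hc : Nat.card (suppGraph G).ConnectedComponent
      = Nat.card (suppGraph G').ConnectedComponent :=
    Nat.card_congr iso.connectedComponentEquiv
  rw [card_verts G, card_verts G', card_cc G, card_cc G', he, hs, hc]
  push_cast
  ring

end General
section ModelApp

variable {k : ℕ} {r : ℝ} {L L' : ℕ → ℝ}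

lemma model_transfer (hr : 0 < r)
    (hL0 : L 0 = 0) (hL'0 : L' 0 = 0)
    (hL'pos : ∀ i, 1 ≤ i → i ≤ k → 0 < L' i)
    (hagree : ∀ i, 2 ≤ i → i ≤ k → L' i = L i)
    (h1 : L 1 < r)
    {a b : ℕ × ℕ} (ha : IsModelVertex k r L a) (hb : IsModelVertex k r L b)
    (hadj : ModelAdj r L a b) :
    IsModelVertex k r L' a ∧ IsModelVertex k r L' b ∧ ModelAdj r L' a b := by
  have hbig : ∀ i, i ≤ k → r ≤ L i → 2 ≤ i ∧ L' i = L i := by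
    intro i hik hi
    match i with
    | 0 => rw [hL0] at hi; linarith
    | 1 => linarith
    | (n+2) => exact ⟨by omega, hagree _ (by omega) hik⟩
  have hnn : ∀ i, i ≤ k → 0 ≤ L' i := by
    intro i hik
    rcases Nat.eq_zero_or_pos i with h | h
    · simp [h, hL'0]
    · exact (hL'pos i h hik).le
  obtain ⟨ha1, ha2, ha3, ha4⟩ := ha
  obtain ⟨hb1, hb2, hb3, hb4⟩ := hb
  rcases hadj with ⟨e1, e2, e3⟩ | ⟨e1, e2, e3⟩
  · obtain ⟨h2, heq⟩ := hbig a.1 ha1 e3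
    have hra : r ≤ L' a.1 := heq ▸ e3
    have hrb : r ≤ L' b.1 := e1 ▸ hra
    exact ⟨⟨ha1, ha2, ha3, by linarith [hnn a.2 ha2]⟩,
      ⟨hb1, hb2, hb3, by linarith [hnn b.2 hb2]⟩, Or.inl ⟨e1, e2, hra⟩⟩
  · obtain ⟨h2, heq⟩ := hbig a.2 ha2 e3
    have hra : r ≤ L' a.2 := heq ▸ e3
    have hrb : r ≤ L' b.2 := e1 ▸ hra
    exact ⟨⟨ha1, ha2, ha3, by linarith [hnn a.1 ha1]⟩,
      ⟨hb1, hb2, hb3, by linarith [hnn b.1 hb1]⟩, Or.inr ⟨e1, e2, hra⟩⟩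

lemma finite_modelVertex : Finite (ModelVertex k r L) := by
  refine Finite.of_injective
    (fun v : ModelVertex k r L =>
      ((⟨v.val.1, Nat.lt_succ_of_le v.prop.1⟩ : Fin (k+1)),
       (⟨v.val.2, Nat.lt_succ_of_le v.prop.2.1⟩ : Fin (k+1)))) ?_
  intro x y h
  simp only [Prod.mk.injEq, Fin.mk.injEq] at h
  exact Subtype.ext (Prod.ext h.1 h.2)

end ModelApp

/-- if `4 ≤ k`, `L` and `L'` agree in coordinates `2,…,k`, and both
`L 1 < r` and `L' 1 < r`, then `e − v + c` is the same for `(G_k)_{r,L}` and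
`(G_k)_{r,L'}`. -/
theorem model_euler_invariant_L1 (k : ℕ) (hk : 4 ≤ k) (r : ℝ) (hr : 0 < r)
    (L L' : ℕ → ℝ) (hL0 : L 0 = 0) (hL'0 : L' 0 = 0)
    (hLpos : ∀ i, 1 ≤ i → i ≤ k → 0 < L i) (hL'pos : ∀ i, 1 ≤ i → i ≤ k → 0 < L' i)
    (hagree : ∀ i, 2 ≤ i → i ≤ k → L' i = L i)
    (h1 : L 1 < r) (h1' : L' 1 < r) :
    (Nat.card (modelGraph k r L).edgeSet : ℤ) - (Nat.card (ModelVertex k r L) : ℤ)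
      + (Nat.card (modelGraph k r L).ConnectedComponent : ℤ)
    = (Nat.card (modelGraph k r L').edgeSet : ℤ) - (Nat.card (ModelVertex k r L') : ℤ)
      + (Nat.card (modelGraph k r L').ConnectedComponent : ℤ) := by
  haveI : Finite (ModelVertex k r L) := finite_modelVertex
  haveI : Finite (ModelVertex k r L') := finite_modelVertex
  have hagree' : ∀ i, 2 ≤ i → i ≤ k → L i = L' i := fun i h2 hik => (hagree i h2 hik).symm
  have auxLR : ∀ v : ModelVertex k r L, v ∈ (modelGraph k r L).support →
      IsModelVertex k r L' v.val ∧ ∃ w : ModelVertex k r L', ModelAdj r L' v.val w.val := by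
    intro v hv
    obtain ⟨w, hw⟩ := (SimpleGraph.mem_support _).mp hv
    have t := model_transfer hr hL0 hL'0 hL'pos hagree h1 v.prop w.prop hw
    exact ⟨t.1, ⟨⟨w.val, t.2.1⟩, t.2.2⟩⟩
  have auxRL : ∀ v : ModelVertex k r L', v ∈ (modelGraph k r L').support →
      IsModelVertex k r L v.val ∧ ∃ w : ModelVertex k r L, ModelAdj r L v.val w.val := by
    intro v hv
    obtain ⟨w, hw⟩ := (SimpleGraph.mem_support _).mp hv
    have t := model_transfer hr hL'0 hL0 hLpos hagree' h1' v.prop w.prop hw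
    exact ⟨t.1, ⟨⟨w.val, t.2.1⟩, t.2.2⟩⟩
  refine euler_eq (modelGraph k r L) (modelGraph k r L')
    { toFun := fun v => ⟨⟨v.1.val, (auxLR v.1 v.2).1⟩, by
        obtain ⟨w, hw⟩ := (auxLR v.1 v.2).2
        exact (SimpleGraph.mem_support _).mpr ⟨w, hw⟩⟩,
      invFun := fun v => ⟨⟨v.1.val, (auxRL v.1 v.2).1⟩, by
        obtain ⟨w, hw⟩ := (auxRL v.1 v.2).2
        exact (SimpleGraph.mem_support _).mpr ⟨w, hw⟩⟩,
      left_inv := fun v => Subtype.ext (Subtype.ext rfl),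
      right_inv := fun v => Subtype.ext (Subtype.ext rfl) } ?_
  intro a b
  constructor
  · intro h
    exact (model_transfer hr hL0 hL'0 hL'pos hagree h1 a.1.prop b.1.prop h).2.2
  · intro h
    exact (model_transfer hr hL'0 hL0 hLpos hagree' h1'
      (auxLR a.1 a.2).1 (auxLR b.1 b.2).1 h).2.2
end

section
/- Let G be a finite connected simple graph with at least two vertices, equipped with a vertex weight function w : V(G) → ℝ_{≥0}, and let v₀ be a vertex of G with w(v₀) = min over all vertices of w. Let H be the induced subgraph of G on V(G) \ {v₀}, and assume H is connected. Then every biased spanning tree of H extends to a biased spanning tree of G; that is, for every biased spanning tree T'' of H there exists a biased spanning tree T* of G whose edge set contains the edge set of T''. -/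
open scoped BigOperators

/-- The priority of an edge: the minimum of the weights of its two endpoints. -/
noncomputable def edgePriority {V : Type*} (w : V → ℝ) : Sym2 V → ℝ :=
  Sym2.lift ⟨fun u v => min (w u) (w v), fun u v => min_comm (w u) (w v)⟩

/-- `T` is a spanning tree of the induced subgraph of `G` on the vertex set `S`:
it is a subgraph of `G` whose vertex set is exactly `S` and which is a tree. -/
def IsSpanningTreeOn {V : Type*} {G : SimpleGraph V} (S : Set V) (T : G.Subgraph) : Prop :=
  T.verts = S ∧ T.coe.IsTree

/-- The total edge priority of a subgraph. -/
noncomputable def totalPriority {V : Type*} {G : SimpleGraph V} (w : V → ℝ)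
    (T : G.Subgraph) : ℝ :=
  ∑ᶠ e ∈ T.edgeSet, edgePriority w e

/-- A biased spanning tree (of the induced subgraph of `G` on `S`): a spanning tree
maximizing the total edge priority among all such spanning trees. -/
def IsBiasedSpanningTreeOn {V : Type*} {G : SimpleGraph V} (w : V → ℝ) (S : Set V)
    (T : G.Subgraph) : Prop :=
  IsSpanningTreeOn S T ∧
    ∀ T' : G.Subgraph, IsSpanningTreeOn S T' → totalPriority w T' ≤ totalPriority w T

open SimpleGraph

section GraphAux
variable {W : Type*}

lemma exists_boundary' {K B : SimpleGraph W} {u v : W} (p : K.Walk u v)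
    (h : ¬B.Reachable u v) : ∃ c d, K.Adj c d ∧ ¬B.Reachable c d := by
  induction p with
  | nil => exact absurd (Reachable.refl _) h
  | @cons a x b hadj q ih =>
    by_cases hx : B.Reachable a x
    · exact ih (fun hr => h (hx.trans hr))
    · exact ⟨a, x, hadj, hx⟩

lemma isAcyclic_of_hom' {W' : Type*} {G₁ : SimpleGraph W} {G₂ : SimpleGraph W'}
    (f : G₁ →g G₂) (hf : Function.Injective f) (h : G₂.IsAcyclic) : G₁.IsAcyclic :=
  fun _ c hc => h (c.map f) ((Walk.map_isCycle_iff_of_injective hf).mpr hc)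

lemma add_edge_isAcyclic' {B : SimpleGraph W} (hB : B.IsAcyclic) {c d : W}
    (hne : c ≠ d) (hr : ¬B.Reachable c d) :
    (B ⊔ fromEdgeSet {s(c, d)}).IsAcyclic := by
  set B' := B ⊔ fromEdgeSet {s(c, d)} with hB'
  have hle : B' \ fromEdgeSet {s(c, d)} ≤ B := by
    intro x y hxy
    rw [sdiff_adj] at hxy
    rcases hxy with ⟨hxy1, hxy2⟩
    rcases hxy1 with h1 | h1
    · exact h1
    · exact absurd h1 hxy2
  have hbridge : B'.IsBridge s(c, d) := by
    rw [isBridge_iff]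
    intro hreach
    exact hr (hreach.mono hle)
  intro v q hq
  by_cases he : s(c, d) ∈ q.edges
  · exact (isBridge_iff_forall_cycle_notMem (show B'.Adj c d from Or.inr (by simp [fromEdgeSet_adj, hne]))).mp hbridge q hq he
  · have hsub : ∀ e ∈ q.edges, e ∈ B.edgeSet := by
      intro e heq
      have := q.edges_subset_edgeSet heq
      rw [hB', edgeSet_sup, edgeSet_fromEdgeSet] at this
      rcases this with h1 | h1
      · exact h1
      · exact absurd h1.1 (by rintro rfl; exact he heq)
    exact hB (q.transfer B hsub) (hq.transfer hsub)

lemma exists_tree_between' [Finite W] {K A : SimpleGraph W} (hK : K.Connected)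
    (hAK : A ≤ K) (hA : A.IsAcyclic) :
    ∃ B : SimpleGraph W, A ≤ B ∧ B ≤ K ∧ B.IsTree := by
  classical
  set 𝒜 : Set (SimpleGraph W) := {B | A ≤ B ∧ B ≤ K ∧ B.IsAcyclic} with h𝒜
  have hfin : 𝒜.Finite := Set.toFinite _
  have hne : 𝒜.Nonempty := ⟨A, le_refl _, hAK, hA⟩
  obtain ⟨B, hB, hmax⟩ := Set.Finite.exists_maximalFor (fun B => B.edgeSet.ncard) 𝒜 hfin hne
  refine ⟨B, hB.1, hB.2.1, ?_, hB.2.2⟩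
  rw [connected_iff]
  refine ⟨fun u v => ?_, hK.nonempty⟩
  by_contra hreach
  obtain ⟨p⟩ := hK.preconnected u v
  obtain ⟨c, d, hcd, hcdr⟩ := exists_boundary' p hreach
  have hne' : c ≠ d := hcd.ne
  set B' := B ⊔ fromEdgeSet {s(c, d)} with hB'
  have hB'mem : B' ∈ 𝒜 := by
    refine ⟨le_trans hB.1 le_sup_left, sup_le hB.2.1 ?_, add_edge_isAcyclic' hB.2.2 hne' hcdr⟩
    intro x y hxy
    rw [fromEdgeSet_adj, Set.mem_singleton_iff, Sym2.eq_iff] at hxy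
    rcases hxy.1 with ⟨rfl, rfl⟩ | ⟨rfl, rfl⟩
    · exact hcd
    · exact hcd.symm
  have hnotmem : s(c, d) ∉ B.edgeSet := fun h => hcdr (Adj.reachable h)
  have hedge : B'.edgeSet = insert s(c, d) B.edgeSet := by
    rw [hB', edgeSet_sup, edgeSet_fromEdgeSet]
    rw [Set.union_comm]
    have : ({s(c,d)} : Set (Sym2 W)) \ Sym2.diagSet = {s(c,d)} := by
      ext e
      simp only [Set.mem_diff, Set.mem_singleton_iff, Set.mem_setOf_eq, Sym2.mem_diagSet,
        and_iff_left_iff_imp]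
      rintro rfl
      simp [hne']
    rw [this, Set.singleton_union]
  have hlt : B.edgeSet.ncard < B'.edgeSet.ncard := by
    rw [hedge, Set.ncard_insert_of_notMem hnotmem (Set.toFinite _)]
    omega
  have := hmax hB'mem (le_of_lt hlt)
  simp only at this
  omega

lemma isTree_of_iso' {W₁ W₂ : Type*} {G₁ : SimpleGraph W₁} {G₂ : SimpleGraph W₂}
    (e : G₁ ≃g G₂) (h : G₁.IsTree) : G₂.IsTree := by
  constructor
  · exact Connected.map e.toHom (e.toEquiv.surjective) h.isConnected
  · exact fun _ c hc => h.IsAcyclic (c.map e.symm.toHom)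
      ((Walk.map_isCycle_iff_of_injective e.symm.toEquiv.injective).mpr hc)

end GraphAux

section SubgraphAux
variable {V : Type*} {G : SimpleGraph V}

/-- hom from coe to spanningCoe -/
def coeToSpanningHom (H : G.Subgraph) : H.coe →g H.spanningCoe where
  toFun := Subtype.val
  map_rel' := fun h => h

lemma coeToSpanningHom_injective (H : G.Subgraph) :
    Function.Injective (coeToSpanningHom H) := Subtype.val_injective

lemma lift_walk' {H : G.Subgraph} {a b : V} (p : H.spanningCoe.Walk a b)
    (ha : a ∈ H.verts) (hb : b ∈ H.verts) :
    ∃ q : H.coe.Walk ⟨a, ha⟩ ⟨b, hb⟩, q.map (coeToSpanningHom H) = p := by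
  induction p with
  | nil => exact ⟨Walk.nil, rfl⟩
  | @cons a x b hadj q ih =>
    have hx : x ∈ H.verts := (SimpleGraph.Subgraph.Adj.snd_mem hadj)
    obtain ⟨q', hq'⟩ := ih hx hb
    refine ⟨Walk.cons (by exact hadj) q', ?_⟩
    subst hq'; rfl

lemma spanningCoe_isAcyclic' {H : G.Subgraph} (hac : H.coe.IsAcyclic) :
    H.spanningCoe.IsAcyclic := by
  intro v c hc
  have hv : v ∈ H.verts := by
    cases c with
    | nil => exact absurd rfl hc.ne_nil
    | cons h q => exact SimpleGraph.Subgraph.Adj.fst_mem h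
  obtain ⟨q, rfl⟩ := lift_walk' c hv hv
  exact hac q ((Walk.map_isCycle_iff_of_injective (coeToSpanningHom_injective H)).mp hc)

/-- turn a simple graph on a subtype into a subgraph -/
def subOfLE (G : SimpleGraph V) (S : Set V) (B : SimpleGraph ↥S)
    (hB : ∀ x y : ↥S, B.Adj x y → G.Adj ↑x ↑y) : G.Subgraph where
  verts := S
  Adj a b := ∃ (ha : a ∈ S) (hb : b ∈ S), B.Adj ⟨a, ha⟩ ⟨b, hb⟩
  adj_sub := by rintro a b ⟨ha, hb, h⟩; exact hB _ _ h
  edge_vert := by rintro a b ⟨ha, hb, h⟩; exact ha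
  symm := ⟨by rintro a b ⟨ha, hb, h⟩; exact ⟨hb, ha, h.symm⟩⟩

lemma subOfLE_coe (G : SimpleGraph V) (S : Set V) (B : SimpleGraph ↥S) (hB) :
    (subOfLE G S B hB).coe = B := by
  ext x y
  constructor
  · rintro ⟨_, _, h⟩; exact h
  · intro h; exact ⟨x.2, y.2, h⟩

lemma tree_edge_ncard [Fintype V] {X : G.Subgraph} (h : X.coe.IsTree) :
    X.edgeSet.ncard + 1 = X.verts.ncard := by
  classical
  haveI : Fintype ↥X.verts := Fintype.ofFinite _
  haveI : Fintype ↥X.coe.edgeSet := Fintype.ofFinite _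
  have hc := h.card_edgeFinset
  have h1 : X.coe.edgeFinset.card = X.coe.edgeSet.ncard := by
    rw [Set.ncard_eq_toFinset_card']
    congr 1
  have h2 : X.coe.edgeSet.ncard = X.edgeSet.ncard := by
    rw [← SimpleGraph.Subgraph.image_coe_edgeSet_coe X]
    exact (Set.ncard_image_of_injective _ (Sym2.map.injective Subtype.val_injective)).symm
  have h3 : (Fintype.card ↥X.verts : ℕ) = X.verts.ncard := by
    rw [← Nat.card_coe_set_eq, Nat.card_eq_fintype_card]
  omega

lemma totalPriority_eq [Fintype V] (w : V → ℝ) (X : G.Subgraph) :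
    totalPriority w X = ∑ e ∈ (Set.toFinite X.edgeSet).toFinset, edgePriority w e := by
  rw [totalPriority, ← finsum_mem_coe_finset, Set.Finite.coe_toFinset]

lemma tp_split [Fintype V] [DecidableEq (Sym2 V)] (w : V → ℝ) {X Y : G.Subgraph} (h : X.edgeSet ⊆ Y.edgeSet) :
    totalPriority w Y = totalPriority w X +
      ∑ e ∈ ((Set.toFinite Y.edgeSet).toFinset \ (Set.toFinite X.edgeSet).toFinset),
        edgePriority w e := by
  classical
  rw [totalPriority_eq, totalPriority_eq, add_comm]
  exact (Finset.sum_sdiff (Set.Finite.toFinset_subset_toFinset.mpr h)).symm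

lemma edgePriority_ge {v₀ : V} (w : V → ℝ) (hv₀ : ∀ v, w v₀ ≤ w v) (e : Sym2 V) :
    w v₀ ≤ edgePriority w e := by
  induction e using Sym2.ind with
  | _ a b => exact le_min (hv₀ a) (hv₀ b)

lemma edgePriority_of_mem {v₀ : V} (w : V → ℝ) (hv₀ : ∀ v, w v₀ ≤ w v) {e : Sym2 V}
    (he : v₀ ∈ e) : edgePriority w e = w v₀ := by
  induction e using Sym2.ind with
  | _ a b =>
    rcases Sym2.mem_iff.mp he with rfl | rfl
    · exact min_eq_left (hv₀ b)
    · exact min_eq_right (hv₀ a)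

end SubgraphAux
/-- if `v₀` has minimal weight and `G − v₀` is connected, then every biased
spanning tree of `G − v₀` extends to a biased spanning tree of `G`. -/
theorem biased_spanning_tree_extension
    {V : Type*} [Fintype V] (G : SimpleGraph V) (hG : G.Connected)
    (hcard : 2 ≤ Fintype.card V)
    (w : V → ℝ) (hw : ∀ v, 0 ≤ w v)
    (v₀ : V) (hv₀ : ∀ v, w v₀ ≤ w v)
    (hH : (G.induce {v : V | v ≠ v₀}).Connected)
    (T'' : G.Subgraph) (hT'' : IsBiasedSpanningTreeOn w {v : V | v ≠ v₀} T'') :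
    ∃ T : G.Subgraph, IsBiasedSpanningTreeOn w Set.univ T ∧ T''.edgeSet ⊆ T.edgeSet := by
  classical
  set S : Set V := {v : V | v ≠ v₀} with hS
  set n := Fintype.card V with hn
  have hSncard : S.ncard = n - 1 := by
    have hSeq : S = Set.univ \ {v₀} := by ext v; simp [hS]
    rw [hSeq, Set.ncard_diff (Set.subset_univ _), Set.ncard_univ, Set.ncard_singleton,
      Nat.card_eq_fintype_card]
  have huncard : (Set.univ : Set V).ncard = n := by
    rw [Set.ncard_univ, Nat.card_eq_fintype_card]
  have hT''v : T''.verts = S := hT''.1.1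
  have hT''tree : T''.coe.IsTree := hT''.1.2
  have hT''card : T''.edgeSet.ncard + 1 = n - 1 := by
    have h := tree_edge_ncard hT''tree
    rwa [hT''v, hSncard] at h
  -- KEY INEQUALITY
  have key : ∀ T' : G.Subgraph, IsSpanningTreeOn Set.univ T' →
      totalPriority w T' ≤ totalPriority w T'' + w v₀ := by
    intro T' hT'
    obtain ⟨hT'v, hT'tree⟩ := hT'
    set F : G.Subgraph := T'.induce S with hF
    have hFle : F ≤ T' := by
      have h1 : F ≤ T'.induce T'.verts :=
        SimpleGraph.Subgraph.induce_mono_right (by rw [hT'v]; exact Set.subset_univ _)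
      rwa [SimpleGraph.Subgraph.induce_self_verts] at h1
    have hFac : F.coe.IsAcyclic :=
      isAcyclic_of_hom' (SimpleGraph.Subgraph.inclusion hFle)
        (SimpleGraph.Subgraph.inclusion.injective hFle) hT'tree.IsAcyclic
    have hFK : F.coe ≤ G.induce S := by
      intro x y hxy
      exact F.coe_adj_sub _ _ hxy
    obtain ⟨B, hAB, hBK, hBtree⟩ := exists_tree_between' hH hFK hFac
    set T₃ : G.Subgraph := subOfLE G S B (fun x y h => hBK h) with hT₃
    have hT₃coe : T₃.coe = B := subOfLE_coe G S B _
    have hT₃tree : T₃.coe.IsTree := by rw [hT₃coe]; exact hBtree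
    have hT₃S : IsSpanningTreeOn S T₃ := ⟨rfl, hT₃tree⟩
    have hFT₃ : F ≤ T₃ := by
      constructor
      · exact subset_of_eq rfl
      · rintro a b ⟨ha, hb, hadj⟩
        exact ⟨ha, hb, hAB (show F.coe.Adj ⟨a, ha⟩ ⟨b, hb⟩ from ⟨ha, hb, hadj⟩)⟩
    have hle3 : totalPriority w T₃ ≤ totalPriority w T'' := hT''.2 T₃ hT₃S
    have hc1 : T'.edgeSet.ncard + 1 = n := by
      have h := tree_edge_ncard hT'tree
      rwa [hT'v, huncard] at h
    have hc3 : T₃.edgeSet.ncard + 1 = n - 1 := by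
      have h := tree_edge_ncard hT₃tree
      rwa [show T₃.verts = S from rfl, hSncard] at h
    have hFsubT' : F.edgeSet ⊆ T'.edgeSet := SimpleGraph.Subgraph.edgeSet_mono hFle
    have hFsubT₃ : F.edgeSet ⊆ T₃.edgeSet := SimpleGraph.Subgraph.edgeSet_mono hFT₃
    set D₁ : Finset (Sym2 V) :=
      (Set.toFinite T'.edgeSet).toFinset \ (Set.toFinite F.edgeSet).toFinset with hD₁
    set D₃ : Finset (Sym2 V) :=
      (Set.toFinite T₃.edgeSet).toFinset \ (Set.toFinite F.edgeSet).toFinset with hD₃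
    have hcard1 : D₁.card + F.edgeSet.ncard = T'.edgeSet.ncard := by
      rw [Set.ncard_eq_toFinset_card F.edgeSet, Set.ncard_eq_toFinset_card T'.edgeSet]
      exact Finset.card_sdiff_add_card_eq_card
        (Set.Finite.toFinset_subset_toFinset.mpr hFsubT')
    have hcard3 : D₃.card + F.edgeSet.ncard = T₃.edgeSet.ncard := by
      rw [Set.ncard_eq_toFinset_card F.edgeSet, Set.ncard_eq_toFinset_card T₃.edgeSet]
      exact Finset.card_sdiff_add_card_eq_card
        (Set.Finite.toFinset_subset_toFinset.mpr hFsubT₃)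
    have hk : D₁.card = D₃.card + 1 := by omega
    have hsplit1 : totalPriority w T' = totalPriority w F +
        ∑ e ∈ D₁, edgePriority w e := tp_split w hFsubT'
    have hsplit3 : totalPriority w T₃ = totalPriority w F +
        ∑ e ∈ D₃, edgePriority w e := tp_split w hFsubT₃
    have hconst : ∀ e ∈ D₁, edgePriority w e = w v₀ := by
      intro e he
      apply edgePriority_of_mem w hv₀
      rw [hD₁, Finset.mem_sdiff, Set.Finite.mem_toFinset, Set.Finite.mem_toFinset] at he
      obtain ⟨he1, he2⟩ := he
      induction e using Sym2.ind with
      | _ a b =>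
        have hadj : T'.Adj a b := he1
        have hnadj : ¬F.Adj a b := he2
        rw [Sym2.mem_iff]
        by_contra hcon
        push_neg at hcon
        exact hnadj ⟨fun h => hcon.1 h.symm, fun h => hcon.2 h.symm, hadj⟩
    have hsum1 : ∑ e ∈ D₁, edgePriority w e = D₁.card * w v₀ := by
      rw [Finset.sum_congr rfl hconst, Finset.sum_const, nsmul_eq_mul]
    have hsum3 : (D₃.card : ℝ) * w v₀ ≤ ∑ e ∈ D₃, edgePriority w e := by
      have h := Finset.card_nsmul_le_sum D₃ (edgePriority w) (w v₀)
        (fun e _ => edgePriority_ge w hv₀ e)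
      rwa [nsmul_eq_mul] at h
    have hkR : (D₁.card : ℝ) = (D₃.card : ℝ) + 1 := by exact_mod_cast hk
    rw [hsplit1, hsum1, hkR]
    nlinarith [hsum3, hle3, hsplit3]
  -- CONSTRUCTION
  have hAac : T''.spanningCoe.IsAcyclic := spanningCoe_isAcyclic' hT''tree.IsAcyclic
  obtain ⟨B₀, hAB₀, hB₀G, hB₀tree⟩ := exists_tree_between' hG T''.spanningCoe_le hAac
  set T : G.Subgraph := SimpleGraph.toSubgraph B₀ hB₀G with hT
  have hTspan : T.spanningCoe = B₀ := rfl
  have hTcoe : T.coe.IsTree :=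
    isTree_of_iso' (T.spanningCoeEquivCoeOfSpanning (SimpleGraph.toSubgraph.isSpanning B₀ hB₀G))
      (by rw [hTspan]; exact hB₀tree)
  have hTst : IsSpanningTreeOn Set.univ T := ⟨rfl, hTcoe⟩
  have hsub : T''.edgeSet ⊆ T.edgeSet := by
    intro e he
    induction e using Sym2.ind with
    | _ a b =>
      have hadj : T''.Adj a b := he
      exact hAB₀ hadj
  have hcT : T.edgeSet.ncard + 1 = n := by
    have h := tree_edge_ncard hTcoe
    rwa [show T.verts = Set.univ from rfl, huncard] at h
  set D₀ : Finset (Sym2 V) :=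
    (Set.toFinite T.edgeSet).toFinset \ (Set.toFinite T''.edgeSet).toFinset with hD₀
  have hcard0 : D₀.card + T''.edgeSet.ncard = T.edgeSet.ncard := by
    rw [Set.ncard_eq_toFinset_card T''.edgeSet, Set.ncard_eq_toFinset_card T.edgeSet]
    exact Finset.card_sdiff_add_card_eq_card
      (Set.Finite.toFinset_subset_toFinset.mpr hsub)
  have hd0 : D₀.card = 1 := by omega
  have hsum0 : (D₀.card : ℝ) * w v₀ ≤ ∑ e ∈ D₀, edgePriority w e := by
    have h := Finset.card_nsmul_le_sum D₀ (edgePriority w) (w v₀)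
      (fun e _ => edgePriority_ge w hv₀ e)
    rwa [nsmul_eq_mul] at h
  have hsplit0 : totalPriority w T = totalPriority w T'' +
      ∑ e ∈ D₀, edgePriority w e := tp_split w hsub
  have hTgt : totalPriority w T'' + w v₀ ≤ totalPriority w T := by
    rw [hsplit0]
    rw [hd0] at hsum0
    push_cast at hsum0
    linarith [hsum0]
  refine ⟨T, ⟨hTst, fun T' hT' => le_trans (key T' hT') hTgt⟩, hsub⟩
end

section
/- Let k ≥ 4, suppose L_2 ≥ L_3 ≥ ⋯ ≥ L_k, L_4 < r ≤ L_3, and L_1 < r ≤ L_1 + L_k. Then the model graph (G_k)_{r,L} has exactly k(k−1) + 4 − 2h vertices, exactly 4(k−1) edges, and exactly (k−2)(k−3) + 2 − 2h connected components; in particular e((G_k)_{r,L}) − v((G_k)_{r,L}) + c((G_k)_{r,L}) = 0. -/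
-- AUX
def edgeKey (k : ℕ) (p : ℕ × ℕ) : ℕ := p.1 * (k+1) + p.2

lemma edgeKey_inj {k : ℕ} {p q : ℕ × ℕ} (hp : p.2 ≤ k) (hq : q.2 ≤ k)
    (h : edgeKey k p = edgeKey k q) : p = q := by
  unfold edgeKey at h
  have h1 : p.1 = q.1 := by
    rcases lt_trichotomy p.1 q.1 with hlt | heq | hgt
    · have h2 : (p.1 + 1) * (k+1) ≤ q.1 * (k+1) := Nat.mul_le_mul_right _ hlt
      have h3 : (p.1 + 1) * (k+1) = p.1 * (k+1) + (k+1) := by ring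
      linarith
    · exact heq
    · have h2 : (q.1 + 1) * (k+1) ≤ p.1 * (k+1) := Nat.mul_le_mul_right _ hgt
      have h3 : (q.1 + 1) * (k+1) = q.1 * (k+1) + (k+1) := by ring
      linarith
  have h2 : p.2 = q.2 := by rw [h1] at h; omega
  exact Prod.ext h1 h2

def edgeF (k : ℕ) (r : ℝ) (L : ℕ → ℝ) (a b : ModelVertex k r L) : (ℕ × ℕ) × (ℕ × ℕ) :=
  if edgeKey k a.val ≤ edgeKey k b.val then (a.val, b.val) else (b.val, a.val)

lemma edgeF_symm (k : ℕ) (r : ℝ) (L : ℕ → ℝ) (a b : ModelVertex k r L) :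
    edgeF k r L a b = edgeF k r L b a := by
  unfold edgeF
  rcases le_or_gt (edgeKey k a.val) (edgeKey k b.val) with h1 | h1
  · rcases le_or_gt (edgeKey k b.val) (edgeKey k a.val) with h2 | h2
    · have hv : a.val = b.val := edgeKey_inj a.2.2.1 b.2.2.1 (le_antisymm h1 h2)
      simp [h1, h2, hv]
    · rw [if_pos h1, if_neg (not_le.mpr h2)]
  · rw [if_neg (not_le.mpr h1), if_pos h1.le]

def edgeG (k : ℕ) (r : ℝ) (L : ℕ → ℝ) : Sym2 (ModelVertex k r L) → (ℕ × ℕ) × (ℕ × ℕ) :=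
  Sym2.lift ⟨edgeF k r L, edgeF_symm k r L⟩

lemma edgeF_or (k : ℕ) (r : ℝ) (L : ℕ → ℝ) (a b : ModelVertex k r L) :
    edgeF k r L a b = (a.val, b.val) ∨ edgeF k r L a b = (b.val, a.val) := by
  unfold edgeF; split_ifs <;> simp

lemma edgeG_inj (k : ℕ) (r : ℝ) (L : ℕ → ℝ) : Function.Injective (edgeG k r L) := by
  intro e1 e2
  induction e1 using Sym2.ind with | _ a b =>
  induction e2 using Sym2.ind with | _ c d =>
  intro h
  rw [edgeG, Sym2.lift_mk, Sym2.lift_mk] at h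
  change edgeF k r L a b = edgeF k r L c d at h
  have h1 := edgeF_or k r L a b
  have h2 := edgeF_or k r L c d
  rw [Sym2.eq_iff]
  rcases h1 with h1 | h1 <;> rcases h2 with h2 | h2 <;> rw [h1, h2, Prod.mk.injEq] at h
  · exact Or.inl ⟨Subtype.ext h.1, Subtype.ext h.2⟩
  · exact Or.inr ⟨Subtype.ext h.1, Subtype.ext h.2⟩
  · exact Or.inr ⟨Subtype.ext h.2, Subtype.ext h.1⟩
  · exact Or.inl ⟨Subtype.ext h.2, Subtype.ext h.1⟩

lemma edgeG_mk (k : ℕ) (r : ℝ) (L : ℕ → ℝ) (a b : ModelVertex k r L) :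
    edgeG k r L s(a, b) = edgeF k r L a b := by
  rw [edgeG, Sym2.lift_mk]

lemma edgeF_eval_le {k : ℕ} {r : ℝ} {L : ℕ → ℝ} (a b : ModelVertex k r L)
    (h : edgeKey k a.val ≤ edgeKey k b.val) : edgeF k r L a b = (a.val, b.val) := if_pos h

lemma edgeF_eval_gt {k : ℕ} {r : ℝ} {L : ℕ → ℝ} (a b : ModelVertex k r L)
    (h : ¬ edgeKey k a.val ≤ edgeKey k b.val) : edgeF k r L a b = (b.val, a.val) := if_neg h

def compF (k : ℕ) (r : ℝ) (L : ℕ → ℝ) (v : ModelVertex k r L) : ℕ × ℕ :=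
  if v.val.1 = 2 ∨ v.val.2 = 3 then (2,3)
  else if v.val.1 = 3 ∨ v.val.2 = 2 then (3,2)
  else v.val

lemma compF_eq1 {k : ℕ} {r : ℝ} {L : ℕ → ℝ} (v : ModelVertex k r L)
    (h : v.val.1 = 2 ∨ v.val.2 = 3) : compF k r L v = (2,3) := by
  rw [compF, if_pos h]

lemma compF_eq2 {k : ℕ} {r : ℝ} {L : ℕ → ℝ} (v : ModelVertex k r L)
    (h1 : ¬(v.val.1 = 2 ∨ v.val.2 = 3)) (h2 : v.val.1 = 3 ∨ v.val.2 = 2) :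
    compF k r L v = (3,2) := by
  rw [compF, if_neg h1, if_pos h2]

lemma compF_eq3 {k : ℕ} {r : ℝ} {L : ℕ → ℝ} (v : ModelVertex k r L)
    (h1 : ¬(v.val.1 = 2 ∨ v.val.2 = 3)) (h2 : ¬(v.val.1 = 3 ∨ v.val.2 = 2)) :
    compF k r L v = v.val := by
  rw [compF, if_neg h1, if_neg h2]

/-- if `4 ≤ k`, `L 2 ≥ ⋯ ≥ L k`, `L 4 < r ≤ L 3` and `L 1 < r ≤ L 1 + L k`,
then `(G_k)_{r,L}` has `k(k−1) + 4 − 2h` vertices, `4(k−1)` edges and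
`(k−2)(k−3) + 2 − 2h` connected components; in particular `e − v + c = 0`. -/
theorem model_counts_middle' (k : ℕ) (hk : 4 ≤ k) (r : ℝ) (hr : 0 < r) (L : ℕ → ℝ)
    (hL0 : L 0 = 0) (hLpos : ∀ i, 1 ≤ i → i ≤ k → 0 < L i)
    (hmono : ∀ i j, 2 ≤ i → i ≤ j → j ≤ k → L j ≤ L i)
    (hL4 : L 4 < r) (hL3 : r ≤ L 3) (hL1 : L 1 < r) (hL1k : r ≤ L 1 + L k) :
    (Nat.card (ModelVertex k r L) : ℤ)
        = (k : ℤ) * ((k : ℤ) - 1) + 4 - 2 * (pairCount k r L : ℤ) ∧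
    Nat.card (modelGraph k r L).edgeSet = 4 * (k - 1) ∧
    (Nat.card (modelGraph k r L).ConnectedComponent : ℤ)
        = ((k : ℤ) - 2) * ((k : ℤ) - 3) + 2 - 2 * (pairCount k r L : ℤ) ∧
    (Nat.card (modelGraph k r L).edgeSet : ℤ) - (Nat.card (ModelVertex k r L) : ℤ)
      + (Nat.card (modelGraph k r L).ConnectedComponent : ℤ) = 0 := by
  classical
  have hk2 : (2:ℕ) ≤ k := by omega
  have hL2 : r ≤ L 2 := le_trans hL3 (hmono 2 3 le_rfl (by omega) (by omega))
  have hLnn : ∀ y, y ≤ k → 0 ≤ L y := by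
    intro y hy
    rcases Nat.eq_zero_or_pos y with h | h
    · rw [h, hL0]
    · exact (hLpos y h hy).le
  have hrge : ∀ x, x ≤ k → r ≤ L x → x = 2 ∨ x = 3 := by
    intro x hx hLx
    by_contra hc
    push_neg at hc
    rcases Nat.lt_or_ge x 4 with h4 | h4
    · interval_cases x
      · rw [hL0] at hLx; linarith
      · linarith
      · exact hc.1 rfl
      · exact hc.2 rfl
    · have := hmono 4 x (by omega) h4 hx
      linarith
  have hbad1 : ∀ x y, 1 ≤ x → x ≤ k → 1 ≤ y → y ≤ k → x ≠ y → L x + L y < r → 4 ≤ x := by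
    intro x y hx1 hxk hy1 hyk hxy hs
    have hy0 := hLpos y hy1 hyk
    by_contra hlt
    push_neg at hlt
    interval_cases x
    · have hy2 : 2 ≤ y := by omega
      have := hmono y k hy2 hyk le_rfl
      linarith
    · linarith
    · linarith
  set I : Finset ℕ := Finset.Icc 1 k with hI
  set FT : Finset (ℕ × ℕ) := I.offDiag with hFTdef
  set FB : Finset (ℕ × ℕ) := FT.filter (fun p => L p.1 + L p.2 < r) with hFBdef
  set FP : Finset (ℕ × ℕ) := FB.filter (fun p : ℕ × ℕ => p.1 < p.2) with hFPdef
  have hmemB : ∀ p : ℕ × ℕ, p ∈ FB ↔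
      (1 ≤ p.1 ∧ p.1 ≤ k ∧ 1 ≤ p.2 ∧ p.2 ≤ k ∧ p.1 ≠ p.2 ∧ L p.1 + L p.2 < r) := by
    intro p
    rw [hFBdef, Finset.mem_filter, hFTdef, Finset.mem_offDiag]
    simp only [hI, Finset.mem_Icc]
    tauto
  have hPC : pairCount k r L = FP.card := by
    rw [pairCount, ← Set.ncard_coe_finset]
    congr 1
    ext p
    simp only [Set.mem_setOf_eq, Finset.mem_coe]
    rw [hFPdef, Finset.mem_filter, hmemB]
    constructor
    · rintro ⟨h1, h2, h3, h4⟩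
      exact ⟨⟨h1, by omega, by omega, h3, by omega, h4⟩, h2⟩
    · rintro ⟨⟨h1, h2, h3, h4, h5, h6⟩, h7⟩
      exact ⟨h1, h7, h4, h6⟩
  have hswapB : ∀ p : ℕ × ℕ, p ∈ FB → p.swap ∈ FB := by
    intro p hp
    rw [hmemB] at hp ⊢
    simp only [Prod.fst_swap, Prod.snd_swap]
    obtain ⟨h1, h2, h3, h4, h5, h6⟩ := hp
    exact ⟨h3, h4, h1, h2, by omega, by linarith⟩
  have hBP : FB.card = 2 * FP.card := by
    have hsplit := Finset.card_filter_add_card_filter_not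
      (s := FB) (p := fun p : ℕ × ℕ => p.1 < p.2)
    have hneg : (FB.filter (fun p : ℕ × ℕ => ¬ p.1 < p.2)).card = FP.card := by
      refine Finset.card_bij' (fun p _ => p.swap) (fun p _ => p.swap) ?_ ?_ ?_ ?_
      · intro a ha
        rw [Finset.mem_filter] at ha
        rw [hFPdef, Finset.mem_filter]
        have h2 : a.1 ≠ a.2 := ((hmemB a).mp ha.1).2.2.2.2.1
        refine ⟨hswapB a ha.1, ?_⟩
        have h3 := ha.2
        simp only [Prod.fst_swap, Prod.snd_swap]
        omega
      · intro a ha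
        rw [hFPdef, Finset.mem_filter] at ha
        rw [Finset.mem_filter]
        refine ⟨hswapB a ha.1, ?_⟩
        have h3 := ha.2
        simp only [Prod.fst_swap, Prod.snd_swap]
        omega
      · intro a _; exact Prod.swap_swap a
      · intro a _; exact Prod.swap_swap a
    rw [← hFPdef] at hsplit
    omega
  -- vertex set
  set FV : Finset (ℕ × ℕ) :=
    insert (0,2) (insert (0,3) (insert (2,0) (insert (3,0) (FT \ FB)))) with hFVdef
  have hmemTB : ∀ p : ℕ × ℕ, p ∈ FT \ FB ↔
      (1 ≤ p.1 ∧ p.1 ≤ k ∧ 1 ≤ p.2 ∧ p.2 ≤ k ∧ p.1 ≠ p.2 ∧ r ≤ L p.1 + L p.2) := by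
    intro p
    rw [Finset.mem_sdiff]
    constructor
    · rintro ⟨hT, hB⟩
      rw [hFTdef, Finset.mem_offDiag] at hT
      simp only [hI, Finset.mem_Icc] at hT
      refine ⟨hT.1.1, hT.1.2, hT.2.1.1, hT.2.1.2, hT.2.2, not_lt.mp fun hc => hB ?_⟩
      exact (hmemB p).mpr ⟨hT.1.1, hT.1.2, hT.2.1.1, hT.2.1.2, hT.2.2, hc⟩
    · rintro ⟨h1, h2, h3, h4, h5, h6⟩
      constructor
      · rw [hFTdef, Finset.mem_offDiag]
        simp only [hI, Finset.mem_Icc]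
        exact ⟨⟨h1, h2⟩, ⟨h3, h4⟩, h5⟩
      · intro hB
        have := ((hmemB p).mp hB).2.2.2.2.2
        linarith
  have hVset : {p : ℕ × ℕ | IsModelVertex k r L p} = ↑FV := by
    ext p
    obtain ⟨x, y⟩ := p
    simp only [Set.mem_setOf_eq, hFVdef, Finset.coe_insert, Set.mem_insert_iff, Finset.mem_coe]
    constructor
    · rintro ⟨hx, hy, hne, hs⟩
      dsimp only at hx hy hne hs
      rcases Nat.eq_zero_or_pos x with hx0 | hx1
      · subst hx0
        rw [hL0, zero_add] at hs
        rcases hrge y hy hs with h | h <;> subst h <;> simp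
      · rcases Nat.eq_zero_or_pos y with hy0 | hy1
        · subst hy0
          rw [hL0, add_zero] at hs
          rcases hrge x hx hs with h | h <;> subst h <;> simp
        · have hm : (x,y) ∈ FT \ FB := (hmemTB (x,y)).mpr ⟨hx1, hx, hy1, hy, hne, hs⟩
          tauto
    · intro hmem
      rcases hmem with h | h | h | h | h
      · rw [Prod.mk.injEq] at h
        obtain ⟨rfl, rfl⟩ := h
        exact ⟨by omega, by omega, by omega, by rw [hL0, zero_add]; exact hL2⟩
      · rw [Prod.mk.injEq] at h
        obtain ⟨rfl, rfl⟩ := h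
        exact ⟨by omega, by omega, by omega, by rw [hL0, zero_add]; exact hL3⟩
      · rw [Prod.mk.injEq] at h
        obtain ⟨rfl, rfl⟩ := h
        exact ⟨by omega, by omega, by omega, by rw [hL0, add_zero]; exact hL2⟩
      · rw [Prod.mk.injEq] at h
        obtain ⟨rfl, rfl⟩ := h
        exact ⟨by omega, by omega, by omega, by rw [hL0, add_zero]; exact hL3⟩
      · obtain ⟨h1, h2, h3, h4, h5, h6⟩ := (hmemTB (x,y)).mp h
        exact ⟨h2, h4, h5, h6⟩
  have hzmem : ∀ q : ℕ × ℕ, q ∈ FT \ FB → 1 ≤ q.1 ∧ 1 ≤ q.2 :=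
    fun q hq => ⟨((hmemTB q).mp hq).1, ((hmemTB q).mp hq).2.2.1⟩
  have hFVcard : FV.card = 4 + (FT \ FB).card := by
    have h30 : ((3:ℕ),(0:ℕ)) ∉ FT \ FB := by
      intro hm; have := (hzmem _ hm).2; omega
    have h20 : ((2:ℕ),(0:ℕ)) ∉ insert (3,0) (FT \ FB) := by
      simp only [Finset.mem_insert]
      rintro (h | hm)
      · exact absurd h (by decide)
      · have := (hzmem _ hm).2; omega
    have h03 : ((0:ℕ),(3:ℕ)) ∉ insert (2,0) (insert (3,0) (FT \ FB)) := by
      simp only [Finset.mem_insert]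
      rintro (h | h | hm)
      · exact absurd h (by decide)
      · exact absurd h (by decide)
      · have := (hzmem _ hm).1; omega
    have h02 : ((0:ℕ),(2:ℕ)) ∉ insert (0,3) (insert (2,0) (insert (3,0) (FT \ FB))) := by
      simp only [Finset.mem_insert]
      rintro (h | h | h | hm)
      · exact absurd h (by decide)
      · exact absurd h (by decide)
      · exact absurd h (by decide)
      · have := (hzmem _ hm).1; omega
    rw [hFVdef, Finset.card_insert_of_notMem h02, Finset.card_insert_of_notMem h03,
      Finset.card_insert_of_notMem h20, Finset.card_insert_of_notMem h30]
    omega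
  have hIcard : I.card = k := by rw [hI, Nat.card_Icc]; omega
  have hFTcard : FT.card + k = k * k := by
    rw [hFTdef, Finset.offDiag_card, hIcard]
    have : k ≤ k * k := Nat.le_mul_of_pos_left k (by omega)
    omega
  have hsd : (FT \ FB).card + FB.card = FT.card := by
    apply Finset.card_sdiff_add_card_eq_card
    rw [hFBdef]; exact Finset.filter_subset _ _
  have hVcount : (Nat.card (ModelVertex k r L) : ℤ)
      = (k : ℤ) * ((k : ℤ) - 1) + 4 - 2 * (pairCount k r L : ℤ) := by
    have e1 : ModelVertex k r L = ↥{p : ℕ × ℕ | IsModelVertex k r L p} := rfl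
    have e2 : Nat.card (ModelVertex k r L) = FV.card := by
      rw [e1, Nat.card_coe_set_eq, hVset, Set.ncard_coe_finset]
    rw [e2, hFVcard, hPC]
    have c1 : ((FT \ FB).card : ℤ) + (FB.card : ℤ) = (FT.card : ℤ) := by exact_mod_cast hsd
    have c2 : (FT.card : ℤ) + (k : ℤ) = (k : ℤ) * (k : ℤ) := by exact_mod_cast hFTcard
    have c3 : (FB.card : ℤ) = 2 * (FP.card : ℤ) := by exact_mod_cast hBP
    have hx : (k:ℤ) * ((k:ℤ) - 1) = (k:ℤ) * (k:ℤ) - (k:ℤ) := by ring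
    push_cast
    linarith
  -- vertices
  have hv20 : IsModelVertex k r L (2,0) := ⟨by omega, by omega, by omega, by rw [hL0, add_zero]; exact hL2⟩
  have hv30 : IsModelVertex k r L (3,0) := ⟨by omega, by omega, by omega, by rw [hL0, add_zero]; exact hL3⟩
  have hv02 : IsModelVertex k r L (0,2) := ⟨by omega, by omega, by omega, by rw [hL0, zero_add]; exact hL2⟩
  have hv03 : IsModelVertex k r L (0,3) := ⟨by omega, by omega, by omega, by rw [hL0, zero_add]; exact hL3⟩
  have hv23 : IsModelVertex k r L (2,3) := ⟨by omega, by omega, by omega, by simp only; linarith⟩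
  have hv32 : IsModelVertex k r L (3,2) := ⟨by omega, by omega, by omega, by simp only; linarith⟩
  have hv2y : ∀ y, y ≤ k → y ≠ 2 → IsModelVertex k r L (2,y) :=
    fun y hy hne => ⟨by omega, hy, by simp only; omega, by have := hLnn y hy; simp only; linarith⟩
  have hv3y : ∀ y, y ≤ k → y ≠ 3 → IsModelVertex k r L (3,y) :=
    fun y hy hne => ⟨by omega, hy, by simp only; omega, by have := hLnn y hy; simp only; linarith⟩
  have hvx2 : ∀ x, x ≤ k → x ≠ 2 → IsModelVertex k r L (x,2) :=
    fun x hx hne => ⟨hx, by omega, by simp only; omega, by have := hLnn x hx; simp only; linarith⟩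
  have hvx3 : ∀ x, x ≤ k → x ≠ 3 → IsModelVertex k r L (x,3) :=
    fun x hx hne => ⟨hx, by omega, by simp only; omega, by have := hLnn x hx; simp only; linarith⟩
  -- edge finset
  set FE : Finset ((ℕ × ℕ) × (ℕ × ℕ)) :=
      ((I.erase 2).image (fun y => ((2,0),(2,y)))) ∪
      ((I.erase 3).image (fun y => ((3,0),(3,y)))) ∪
      ((I.erase 2).image (fun x => ((0,2),(x,2)))) ∪
      ((I.erase 3).image (fun x => ((0,3),(x,3)))) with hFEdef
  have h2I : (2:ℕ) ∈ I := by rw [hI, Finset.mem_Icc]; omega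
  have h3I : (3:ℕ) ∈ I := by rw [hI, Finset.mem_Icc]; omega
  have hIe2card : (I.erase 2).card = k - 1 := by rw [Finset.card_erase_of_mem h2I, hIcard]
  have hIe3card : (I.erase 3).card = k - 1 := by rw [Finset.card_erase_of_mem h3I, hIcard]
  have hdgen : ∀ (c1 c2 : ℕ × ℕ) (f1 f2 : ℕ → ℕ × ℕ) (s t : Finset ℕ), c1 ≠ c2 →
      Disjoint (s.image (fun y => (c1, f1 y))) (t.image (fun y => (c2, f2 y))) := by
    intro c1 c2 f1 f2 s t hne
    rw [Finset.disjoint_left]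
    rintro a ha hb
    simp only [Finset.mem_image] at ha hb
    obtain ⟨y, -, rfl⟩ := ha
    obtain ⟨z, -, hz⟩ := hb
    exact hne (congrArg Prod.fst hz).symm
  have hEcard : FE.card = 4 * (k - 1) := by
    have d12 : Disjoint ((I.erase 2).image (fun y => (((2:ℕ),(0:ℕ)),((2:ℕ),y))))
        ((I.erase 3).image (fun y => (((3:ℕ),(0:ℕ)),((3:ℕ),y)))) :=
      hdgen _ _ _ _ _ _ (by decide)
    have d13 : Disjoint ((I.erase 2).image (fun y => (((2:ℕ),(0:ℕ)),((2:ℕ),y))))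
        ((I.erase 2).image (fun x => (((0:ℕ),(2:ℕ)),(x,(2:ℕ))))) :=
      hdgen _ _ _ _ _ _ (by decide)
    have d23 : Disjoint ((I.erase 3).image (fun y => (((3:ℕ),(0:ℕ)),((3:ℕ),y))))
        ((I.erase 2).image (fun x => (((0:ℕ),(2:ℕ)),(x,(2:ℕ))))) :=
      hdgen _ _ _ _ _ _ (by decide)
    have d14 : Disjoint ((I.erase 2).image (fun y => (((2:ℕ),(0:ℕ)),((2:ℕ),y))))
        ((I.erase 3).image (fun x => (((0:ℕ),(3:ℕ)),(x,(3:ℕ))))) :=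
      hdgen _ _ _ _ _ _ (by decide)
    have d24 : Disjoint ((I.erase 3).image (fun y => (((3:ℕ),(0:ℕ)),((3:ℕ),y))))
        ((I.erase 3).image (fun x => (((0:ℕ),(3:ℕ)),(x,(3:ℕ))))) :=
      hdgen _ _ _ _ _ _ (by decide)
    have d34 : Disjoint ((I.erase 2).image (fun x => (((0:ℕ),(2:ℕ)),(x,(2:ℕ)))))
        ((I.erase 3).image (fun x => (((0:ℕ),(3:ℕ)),(x,(3:ℕ))))) :=
      hdgen _ _ _ _ _ _ (by decide)
    have dA : Disjoint (((I.erase 2).image (fun y => (((2:ℕ),(0:ℕ)),((2:ℕ),y)))) ∪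
        ((I.erase 3).image (fun y => (((3:ℕ),(0:ℕ)),((3:ℕ),y)))))
        ((I.erase 2).image (fun x => (((0:ℕ),(2:ℕ)),(x,(2:ℕ))))) := by
      rw [Finset.disjoint_union_left]; exact ⟨d13, d23⟩
    have dB : Disjoint ((((I.erase 2).image (fun y => (((2:ℕ),(0:ℕ)),((2:ℕ),y)))) ∪
        ((I.erase 3).image (fun y => (((3:ℕ),(0:ℕ)),((3:ℕ),y))))) ∪
        ((I.erase 2).image (fun x => (((0:ℕ),(2:ℕ)),(x,(2:ℕ))))))
        ((I.erase 3).image (fun x => (((0:ℕ),(3:ℕ)),(x,(3:ℕ))))) := by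
      rw [Finset.disjoint_union_left, Finset.disjoint_union_left]
      exact ⟨⟨d14, d24⟩, d34⟩
    have hj1 : Function.Injective (fun y : ℕ => (((2:ℕ),(0:ℕ)),((2:ℕ),y))) :=
      fun a b hab => by simpa using hab
    have hj2 : Function.Injective (fun y : ℕ => (((3:ℕ),(0:ℕ)),((3:ℕ),y))) :=
      fun a b hab => by simpa using hab
    have hj3 : Function.Injective (fun x : ℕ => (((0:ℕ),(2:ℕ)),(x,(2:ℕ)))) :=
      fun a b hab => by simpa using hab
    have hj4 : Function.Injective (fun x : ℕ => (((0:ℕ),(3:ℕ)),(x,(3:ℕ)))) :=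
      fun a b hab => by simpa using hab
    rw [hFEdef, Finset.card_union_of_disjoint dB, Finset.card_union_of_disjoint dA,
      Finset.card_union_of_disjoint d12, Finset.card_image_of_injective _ hj1,
      Finset.card_image_of_injective _ hj2, Finset.card_image_of_injective _ hj3,
      Finset.card_image_of_injective _ hj4, hIe2card, hIe3card]
    omega
  have hEset : edgeG k r L '' (modelGraph k r L).edgeSet = ↑FE := by
    apply Set.eq_of_subset_of_subset
    · rintro q ⟨e, he, rfl⟩
      revert he
      induction e using Sym2.ind with | _ a b =>
      intro he
      rw [SimpleGraph.mem_edgeSet] at he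
      obtain ⟨⟨ax, ay⟩, hav⟩ := a
      obtain ⟨⟨bx, by'⟩, hbv⟩ := b
      have hax : ax ≤ k := hav.1
      have hay : ay ≤ k := hav.2.1
      have hane : ax ≠ ay := hav.2.2.1
      have hbx : bx ≤ k := hbv.1
      have hby : by' ≤ k := hbv.2.1
      have hbne : bx ≠ by' := hbv.2.2.1
      erw [edgeG_mk]
      rw [Finset.mem_coe, hFEdef]
      simp only [Finset.mem_union, Finset.mem_image, Finset.mem_erase, hI, Finset.mem_Icc]
      rcases he with ⟨h1, h2, h3⟩ | ⟨h1, h2, h3⟩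
      · dsimp only at h1 h2 h3
        subst h1
        rcases hrge ax hax h3 with rfl | rfl
        · rcases h2 with ⟨hz, hnz⟩ | ⟨hnz, hz⟩
          · subst hz
            erw [edgeF_eval_le _ _ (Nat.add_le_add_left (Nat.zero_le _) _)]
            exact Or.inl (Or.inl (Or.inl ⟨by', by omega, rfl⟩))
          · subst hz
            erw [edgeF_eval_gt _ _ (show ¬ edgeKey k ((2:ℕ),ay) ≤ edgeKey k ((2:ℕ),(0:ℕ)) by
              unfold edgeKey; dsimp only; omega)]
            exact Or.inl (Or.inl (Or.inl ⟨ay, by omega, rfl⟩))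
        · rcases h2 with ⟨hz, hnz⟩ | ⟨hnz, hz⟩
          · subst hz
            erw [edgeF_eval_le _ _ (Nat.add_le_add_left (Nat.zero_le _) _)]
            exact Or.inl (Or.inl (Or.inr ⟨by', by omega, rfl⟩))
          · subst hz
            erw [edgeF_eval_gt _ _ (show ¬ edgeKey k ((3:ℕ),ay) ≤ edgeKey k ((3:ℕ),(0:ℕ)) by
              unfold edgeKey; dsimp only; omega)]
            exact Or.inl (Or.inl (Or.inr ⟨ay, by omega, rfl⟩))
      · dsimp only at h1 h2 h3
        subst h1
        rcases hrge ay hay h3 with rfl | rfl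
        · rcases h2 with ⟨hz, hnz⟩ | ⟨hnz, hz⟩
          · subst hz
            erw [edgeF_eval_le _ _ (Nat.add_le_add_right (Nat.mul_le_mul_right _ (Nat.zero_le _)) _)]
            exact Or.inl (Or.inr ⟨bx, by omega, rfl⟩)
          · subst hz
            erw [edgeF_eval_gt _ _ (show ¬ edgeKey k (ax,(2:ℕ)) ≤ edgeKey k ((0:ℕ),(2:ℕ)) by
              unfold edgeKey; dsimp only
              intro hc
              have h5 : ax * (k+1) ≤ 0 * (k+1) := Nat.le_of_add_le_add_right hc
              rw [Nat.zero_mul] at h5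
              have h6 : 0 < ax * (k+1) := Nat.mul_pos (by omega) (by omega)
              exact Nat.not_succ_le_zero 0 (le_trans h6 h5))]
            exact Or.inl (Or.inr ⟨ax, by omega, rfl⟩)
        · rcases h2 with ⟨hz, hnz⟩ | ⟨hnz, hz⟩
          · subst hz
            erw [edgeF_eval_le _ _ (Nat.add_le_add_right (Nat.mul_le_mul_right _ (Nat.zero_le _)) _)]
            exact Or.inr ⟨bx, by omega, rfl⟩
          · subst hz
            erw [edgeF_eval_gt _ _ (show ¬ edgeKey k (ax,(3:ℕ)) ≤ edgeKey k ((0:ℕ),(3:ℕ)) by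
              unfold edgeKey; dsimp only
              intro hc
              have h5 : ax * (k+1) ≤ 0 * (k+1) := Nat.le_of_add_le_add_right hc
              rw [Nat.zero_mul] at h5
              have h6 : 0 < ax * (k+1) := Nat.mul_pos (by omega) (by omega)
              exact Nat.not_succ_le_zero 0 (le_trans h6 h5))]
            exact Or.inr ⟨ax, by omega, rfl⟩
    · intro q hq
      rw [Finset.mem_coe, hFEdef] at hq
      simp only [Finset.mem_union, Finset.mem_image, Finset.mem_erase, hI, Finset.mem_Icc] at hq
      rcases hq with ((⟨y, hy, rfl⟩ | ⟨y, hy, rfl⟩) | ⟨y, hy, rfl⟩) | ⟨y, hy, rfl⟩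
      · refine ⟨s(⟨(2,0), hv20⟩, ⟨(2,y), hv2y y (by omega) (by omega)⟩), ?_, ?_⟩
        · erw [SimpleGraph.mem_edgeSet]
          exact Or.inl ⟨rfl, Or.inl ⟨rfl, by simp only; omega⟩, hL2⟩
        · erw [edgeG_mk, edgeF_eval_le _ _ (Nat.add_le_add_left (Nat.zero_le _) _)]
      · refine ⟨s(⟨(3,0), hv30⟩, ⟨(3,y), hv3y y (by omega) (by omega)⟩), ?_, ?_⟩
        · erw [SimpleGraph.mem_edgeSet]
          exact Or.inl ⟨rfl, Or.inl ⟨rfl, by simp only; omega⟩, hL3⟩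
        · erw [edgeG_mk, edgeF_eval_le _ _ (Nat.add_le_add_left (Nat.zero_le _) _)]
      · refine ⟨s(⟨(0,2), hv02⟩, ⟨(y,2), hvx2 y (by omega) (by omega)⟩), ?_, ?_⟩
        · erw [SimpleGraph.mem_edgeSet]
          exact Or.inr ⟨rfl, Or.inl ⟨rfl, by simp only; omega⟩, hL2⟩
        · erw [edgeG_mk, edgeF_eval_le _ _ (Nat.add_le_add_right (Nat.mul_le_mul_right _ (Nat.zero_le _)) _)]
      · refine ⟨s(⟨(0,3), hv03⟩, ⟨(y,3), hvx3 y (by omega) (by omega)⟩), ?_, ?_⟩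
        · erw [SimpleGraph.mem_edgeSet]
          exact Or.inr ⟨rfl, Or.inl ⟨rfl, by simp only; omega⟩, hL3⟩
        · erw [edgeG_mk, edgeF_eval_le _ _ (Nat.add_le_add_right (Nat.mul_le_mul_right _ (Nat.zero_le _)) _)]
  have hEcount : Nat.card (modelGraph k r L).edgeSet = 4 * (k - 1) := by
    have e1 : Nat.card (modelGraph k r L).edgeSet = ((modelGraph k r L).edgeSet).ncard :=
      Nat.card_coe_set_eq _
    rw [e1, ← Set.ncard_image_of_injective _ (edgeG_inj k r L), hEset, Set.ncard_coe_finset, hEcard]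
  -- reachability
  have hA23_03 : (modelGraph k r L).Adj ⟨(2,3), hv23⟩ ⟨(0,3), hv03⟩ :=
    Or.inr ⟨rfl, Or.inr ⟨by simp only; omega, rfl⟩, hL3⟩
  have hA23_20 : (modelGraph k r L).Adj ⟨(2,3), hv23⟩ ⟨(2,0), hv20⟩ :=
    Or.inl ⟨rfl, Or.inr ⟨by simp only; omega, rfl⟩, hL2⟩
  have hA32_02 : (modelGraph k r L).Adj ⟨(3,2), hv32⟩ ⟨(0,2), hv02⟩ :=
    Or.inr ⟨rfl, Or.inr ⟨by simp only; omega, rfl⟩, hL2⟩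
  have hA32_30 : (modelGraph k r L).Adj ⟨(3,2), hv32⟩ ⟨(3,0), hv30⟩ :=
    Or.inl ⟨rfl, Or.inr ⟨by simp only; omega, rfl⟩, hL3⟩
  have hreach1 : ∀ v : ModelVertex k r L, v.val.1 = 2 ∨ v.val.2 = 3 →
      (modelGraph k r L).Reachable v ⟨(2,0), hv20⟩ := by
    rintro v (h1 | h2)
    · by_cases h0 : v.val.2 = 0
      · have hve : v = ⟨(2,0), hv20⟩ := Subtype.ext (Prod.ext h1 h0)
        rw [hve]
        exact SimpleGraph.Reachable.refl _
      · exact SimpleGraph.Adj.reachable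
          (Or.inl ⟨h1, Or.inr ⟨h0, rfl⟩, by rw [h1]; exact hL2⟩)
    · have hstep : (modelGraph k r L).Reachable v ⟨(0,3), hv03⟩ := by
        by_cases h0 : v.val.1 = 0
        · have hve : v = ⟨(0,3), hv03⟩ := Subtype.ext (Prod.ext h0 h2)
          rw [hve]
          exact SimpleGraph.Reachable.refl _
        · exact SimpleGraph.Adj.reachable
            (Or.inr ⟨h2, Or.inr ⟨h0, rfl⟩, by rw [h2]; exact hL3⟩)
      exact hstep.trans ((hA23_03.reachable.symm).trans hA23_20.reachable)
  have hreach2 : ∀ v : ModelVertex k r L, v.val.1 = 3 ∨ v.val.2 = 2 →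
      (modelGraph k r L).Reachable v ⟨(3,0), hv30⟩ := by
    rintro v (h1 | h2)
    · by_cases h0 : v.val.2 = 0
      · have hve : v = ⟨(3,0), hv30⟩ := Subtype.ext (Prod.ext h1 h0)
        rw [hve]
        exact SimpleGraph.Reachable.refl _
      · exact SimpleGraph.Adj.reachable
          (Or.inl ⟨h1, Or.inr ⟨h0, rfl⟩, by rw [h1]; exact hL3⟩)
    · have hstep : (modelGraph k r L).Reachable v ⟨(0,2), hv02⟩ := by
        by_cases h0 : v.val.1 = 0
        · have hve : v = ⟨(0,2), hv02⟩ := Subtype.ext (Prod.ext h0 h2)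
          rw [hve]
          exact SimpleGraph.Reachable.refl _
        · exact SimpleGraph.Adj.reachable
            (Or.inr ⟨h2, Or.inr ⟨h0, rfl⟩, by rw [h2]; exact hL2⟩)
      exact hstep.trans ((hA32_02.reachable.symm).trans hA32_30.reachable)
  -- compF respects adjacency
  have hcomp_adj : ∀ a b : ModelVertex k r L, (modelGraph k r L).Adj a b →
      compF k r L a = compF k r L b := by
    intro a b hab
    have hax : a.val.1 ≤ k := a.2.1
    have hay : a.val.2 ≤ k := a.2.2.1
    have hane : a.val.1 ≠ a.val.2 := a.2.2.2.1
    have hbne : b.val.1 ≠ b.val.2 := b.2.2.2.1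
    rcases hab with ⟨h1, h2, h3⟩ | ⟨h1, h2, h3⟩
    · rcases hrge a.val.1 hax h3 with h4 | h4
      · rw [compF_eq1 a (Or.inl h4), compF_eq1 b (Or.inl (h1 ▸ h4))]
      · rw [compF_eq2 a (by omega) (Or.inl h4), compF_eq2 b (by omega) (Or.inl (h1 ▸ h4))]
    · rcases hrge a.val.2 hay h3 with h4 | h4
      · rw [compF_eq2 a (by omega) (Or.inr h4), compF_eq2 b (by omega) (Or.inr (h1 ▸ h4))]
      · rw [compF_eq1 a (Or.inr h4), compF_eq1 b (Or.inr (h1 ▸ h4))]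
  have hwalk : ∀ (v w : ModelVertex k r L) (p : (modelGraph k r L).Walk v w),
      compF k r L v = compF k r L w := by
    intro v w p
    induction p with
    | nil => rfl
    | cons h _ ih => exact (hcomp_adj _ _ h).trans ih
  set Φ : (modelGraph k r L).ConnectedComponent → ℕ × ℕ :=
    SimpleGraph.ConnectedComponent.lift (compF k r L) (fun v w p _ => hwalk v w p) with hPhidef
  have hΦmk : ∀ v, Φ ((modelGraph k r L).connectedComponentMk v) = compF k r L v :=
    fun v => rfl
  have hΦinj : Function.Injective Φ := by
    intro c d
    refine SimpleGraph.ConnectedComponent.ind₂ (fun v w hvw => ?_) c d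
    rw [hΦmk, hΦmk] at hvw
    rw [SimpleGraph.ConnectedComponent.eq]
    by_cases h1 : v.val.1 = 2 ∨ v.val.2 = 3
    · have hw1 : w.val.1 = 2 ∨ w.val.2 = 3 := by
        by_contra hw1
        by_cases hw2 : w.val.1 = 3 ∨ w.val.2 = 2
        · rw [compF_eq1 _ h1, compF_eq2 _ hw1 hw2] at hvw
          exact absurd hvw (by decide)
        · rw [compF_eq1 _ h1, compF_eq3 _ hw1 hw2] at hvw
          exact hw1 (Or.inr (by rw [← hvw]))
      exact (hreach1 v h1).trans (hreach1 w hw1).symm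
    · by_cases h2 : v.val.1 = 3 ∨ v.val.2 = 2
      · have hw2 : w.val.1 = 3 ∨ w.val.2 = 2 := by
          by_contra hw2
          by_cases hw1 : w.val.1 = 2 ∨ w.val.2 = 3
          · rw [compF_eq2 _ h1 h2, compF_eq1 _ hw1] at hvw
            exact absurd hvw (by decide)
          · rw [compF_eq2 _ h1 h2, compF_eq3 _ hw1 hw2] at hvw
            exact hw2 (Or.inr (by rw [← hvw]))
        exact (hreach2 v h2).trans (hreach2 w hw2).symm
      · rw [compF_eq3 _ h1 h2] at hvw
        by_cases hw1 : w.val.1 = 2 ∨ w.val.2 = 3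
        · rw [compF_eq1 _ hw1] at hvw
          exact absurd (Or.inr (by rw [hvw]) : v.val.1 = 2 ∨ v.val.2 = 3) h1
        · by_cases hw2 : w.val.1 = 3 ∨ w.val.2 = 2
          · rw [compF_eq2 _ hw1 hw2] at hvw
            exact absurd (Or.inl (by rw [hvw]) : v.val.1 = 3 ∨ v.val.2 = 2) h2
          · rw [compF_eq3 _ hw1 hw2] at hvw
            exact (Subtype.ext hvw : v = w) ▸ SimpleGraph.Reachable.refl v
  -- iso component finset
  set Fiso : Finset (ℕ × ℕ) := ((I.erase 2).erase 3).offDiag \ FB with hFisodef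
  set FC : Finset (ℕ × ℕ) := insert (2,3) (insert (3,2) Fiso) with hFCdef
  have hFBsub : FB ⊆ ((I.erase 2).erase 3).offDiag := by
    intro p hp
    rw [hmemB] at hp
    obtain ⟨h1, h2, h3, h4, h5, h6⟩ := hp
    have hb1 := hbad1 p.1 p.2 h1 h2 h3 h4 h5 h6
    have hb2 := hbad1 p.2 p.1 h3 h4 h1 h2 (by omega) (by linarith)
    rw [Finset.mem_offDiag]
    simp only [Finset.mem_erase, hI, Finset.mem_Icc]
    exact ⟨⟨by omega, by omega, h1, h2⟩, ⟨by omega, by omega, h3, h4⟩, h5⟩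
  have hmemiso : ∀ p : ℕ × ℕ, p ∈ Fiso ↔
      (1 ≤ p.1 ∧ p.1 ≤ k ∧ 1 ≤ p.2 ∧ p.2 ≤ k ∧ p.1 ≠ p.2 ∧ p.1 ≠ 2 ∧ p.1 ≠ 3 ∧
        p.2 ≠ 2 ∧ p.2 ≠ 3 ∧ r ≤ L p.1 + L p.2) := by
    intro p
    rw [hFisodef, Finset.mem_sdiff, Finset.mem_offDiag]
    simp only [Finset.mem_erase, hI, Finset.mem_Icc]
    constructor
    · rintro ⟨⟨⟨h3a, h2a, h1a, hka⟩, ⟨h3b, h2b, h1b, hkb⟩, hne⟩, hB⟩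
      refine ⟨h1a, hka, h1b, hkb, hne, h2a, h3a, h2b, h3b, not_lt.mp fun hc => hB ?_⟩
      exact (hmemB p).mpr ⟨h1a, hka, h1b, hkb, hne, hc⟩
    · rintro ⟨h1, h2, h3, h4, h5, h6, h7, h8, h9, h10⟩
      exact ⟨⟨⟨h7, h6, h1, h2⟩, ⟨h9, h8, h3, h4⟩, h5⟩,
        fun hB => absurd ((hmemB p).mp hB).2.2.2.2.2 (not_lt.mpr h10)⟩
  have hrangeF : Set.range (compF k r L) = ↑FC := by
    ext q
    simp only [hFCdef, Finset.coe_insert, Set.mem_insert_iff, Finset.mem_coe]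
    constructor
    · rintro ⟨v, rfl⟩
      by_cases h1 : v.val.1 = 2 ∨ v.val.2 = 3
      · left; rw [compF_eq1 _ h1]
      · by_cases h2 : v.val.1 = 3 ∨ v.val.2 = 2
        · right; left; rw [compF_eq2 _ h1 h2]
        · right; right
          rw [compF_eq3 _ h1 h2]
          push_neg at h1 h2
          obtain ⟨hx, hy, hne, hs⟩ := v.2
          have hx1 : v.val.1 ≠ 0 := by
            intro h0
            rw [h0, hL0, zero_add] at hs
            rcases hrge _ hy hs with h | h
            · exact h2.2 h
            · exact h1.2 h
          have hy1 : v.val.2 ≠ 0 := by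
            intro h0
            rw [h0, hL0, add_zero] at hs
            rcases hrge _ hx hs with h | h
            · exact h1.1 h
            · exact h2.1 h
          exact (hmemiso v.val).mpr
            ⟨by omega, hx, by omega, hy, hne, h1.1, h2.1, h2.2, h1.2, hs⟩
    · intro hq
      rcases hq with rfl | rfl | hq
      · exact ⟨⟨(2,0), hv20⟩, compF_eq1 _ (Or.inl rfl)⟩
      · exact ⟨⟨(3,0), hv30⟩, compF_eq2 _ (by simp) (Or.inl rfl)⟩
      · obtain ⟨h1, h2, h3, h4, h5, h6, h7, h8, h9, h10⟩ := (hmemiso q).mp hq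
        refine ⟨⟨q, ⟨h2, h4, h5, h10⟩⟩, ?_⟩
        exact compF_eq3 _ (by push_neg; exact ⟨h6, h9⟩) (by push_neg; exact ⟨h7, h8⟩)
  have hrangePhi : Set.range Φ = Set.range (compF k r L) := by
    ext q
    constructor
    · rintro ⟨c, rfl⟩
      refine SimpleGraph.ConnectedComponent.ind (fun v => ?_) c
      exact ⟨v, (hΦmk v).symm⟩
    · rintro ⟨v, rfl⟩
      exact ⟨(modelGraph k r L).connectedComponentMk v, hΦmk v⟩
  have hCcount : Nat.card (modelGraph k r L).ConnectedComponent = FC.card := by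
    rw [Nat.card_congr (Equiv.ofInjective Φ hΦinj), Nat.card_coe_set_eq,
      hrangePhi, hrangeF, Set.ncard_coe_finset]
  have h3e2 : (3:ℕ) ∈ I.erase 2 := by
    rw [Finset.mem_erase]; exact ⟨by omega, h3I⟩
  have hIe23card : ((I.erase 2).erase 3).card = k - 2 := by
    rw [Finset.card_erase_of_mem h3e2, hIe2card]
    omega
  have hisocard : Fiso.card + FB.card = ((I.erase 2).erase 3).offDiag.card := by
    rw [hFisodef]; exact Finset.card_sdiff_add_card_eq_card hFBsub
  have hODcard : ((I.erase 2).erase 3).offDiag.card + (k-2) = (k-2) * (k-2) := by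
    rw [Finset.offDiag_card, hIe23card]
    have : k - 2 ≤ (k-2) * (k-2) := Nat.le_mul_of_pos_left _ (by omega)
    omega
  have hFCcard : FC.card = 2 + Fiso.card := by
    have hm32 : ((3:ℕ),(2:ℕ)) ∉ Fiso := by
      intro hm
      exact ((hmemiso _).mp hm).2.2.2.2.2.2.1 rfl
    have hm23 : ((2:ℕ),(3:ℕ)) ∉ insert (3,2) Fiso := by
      simp only [Finset.mem_insert]
      rintro (h | hm)
      · exact absurd h (by decide)
      · exact ((hmemiso _).mp hm).2.2.2.2.2.1 rfl
    rw [hFCdef, Finset.card_insert_of_notMem hm23, Finset.card_insert_of_notMem hm32]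
    omega
  have hCgoal : (Nat.card (modelGraph k r L).ConnectedComponent : ℤ)
      = ((k:ℤ) - 2) * ((k:ℤ) - 3) + 2 - 2 * (pairCount k r L : ℤ) := by
    rw [hCcount, hFCcard, hPC]
    have c1 : (Fiso.card : ℤ) + (FB.card : ℤ) = (((I.erase 2).erase 3).offDiag.card : ℤ) := by
      exact_mod_cast hisocard
    have c2 : (((I.erase 2).erase 3).offDiag.card : ℤ) + ((k:ℤ) - 2)
        = ((k:ℤ) - 2) * ((k:ℤ) - 2) := by
      have hc : ((k - 2 : ℕ) : ℤ) = (k:ℤ) - 2 := by omega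
      rw [← hc, ← Nat.cast_mul]
      exact_mod_cast hODcard
    have c3 : (FB.card : ℤ) = 2 * (FP.card : ℤ) := by exact_mod_cast hBP
    have hx : ((k:ℤ) - 2) * ((k:ℤ) - 3) = ((k:ℤ) - 2) * ((k:ℤ) - 2) - ((k:ℤ) - 2) := by ring
    push_cast
    linarith
  refine ⟨hVcount, hEcount, hCgoal, ?_⟩
  rw [hVcount, hEcount, hCgoal]
  rw [show ((4 * (k-1) : ℕ) : ℤ) = 4 * ((k:ℤ) - 1) by omega]
  ring
end

section
/- Let k ≥ 4 and suppose 0 < r ≤ L_i for every i ∈ {2,…,k} (L_1 > 0 arbitrary). Then the restricted second configuration space (Star_k)^2_{r,L} is path-connected. -/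
/-- A point of the metric star graph before identification: a pair `(i, t)` with
`1 ≤ i ≤ k` and `0 ≤ t ≤ L i`, i.e. a point on the `i`-th edge at distance `t` from
the center. -/
def StarPt (k : ℕ) (L : ℕ → ℝ) : Type :=
  {p : ℕ × ℝ // 1 ≤ p.1 ∧ p.1 ≤ k ∧ 0 ≤ p.2 ∧ p.2 ≤ L p.1}

/-- The path pseudodistance on the points of the star graph:
`δ((i,s),(j,t)) = |s − t|` if `i = j` and `s + t` otherwise. -/
noncomputable def starDist {k : ℕ} {L : ℕ → ℝ} (p q : StarPt k L) : ℝ :=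
  if p.val.1 = q.val.1 then |p.val.2 - q.val.2| else p.val.2 + q.val.2

theorem starDist_self {k : ℕ} {L : ℕ → ℝ} (p : StarPt k L) : starDist p p = 0 := by
  simp [starDist]

theorem starDist_comm {k : ℕ} {L : ℕ → ℝ} (p q : StarPt k L) :
    starDist p q = starDist q p := by
  unfold starDist
  rcases eq_or_ne p.val.1 q.val.1 with h | h
  · rw [if_pos h, if_pos h.symm, abs_sub_comm]
  · rw [if_neg h, if_neg h.symm, add_comm]

theorem starDist_triangle {k : ℕ} {L : ℕ → ℝ} (p q s : StarPt k L) :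
    starDist p s ≤ starDist p q + starDist q s := by
  obtain ⟨hp1, hp2, hp3, hp4⟩ := p.prop
  obtain ⟨hq1, hq2, hq3, hq4⟩ := q.prop
  obtain ⟨hs1, hs2, hs3, hs4⟩ := s.prop
  unfold starDist
  by_cases h1 : p.val.1 = q.val.1 <;> by_cases h2 : q.val.1 = s.val.1
  · rw [if_pos (h1.trans h2), if_pos h1, if_pos h2]
    exact abs_sub_le _ _ _
  · rw [if_neg (fun h => h2 (h1.symm.trans h)), if_pos h1, if_neg h2]
    have := le_abs_self (p.val.2 - q.val.2)
    linarith
  · rw [if_neg (fun h => h1 (h.trans h2.symm)), if_neg h1, if_pos h2]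
    have := neg_le_abs (q.val.2 - s.val.2)
    linarith
  · by_cases h3 : p.val.1 = s.val.1
    · rw [if_pos h3, if_neg h1, if_neg h2]
      rw [abs_sub_le_iff]
      constructor <;> linarith
    · rw [if_neg h3, if_neg h1, if_neg h2]
      linarith

/-- The path pseudometric space structure on the points of the star graph. -/
noncomputable instance starPseudoMetricSpace (k : ℕ) (L : ℕ → ℝ) :
    PseudoMetricSpace (StarPt k L) where
  dist := starDist
  dist_self := starDist_self
  dist_comm := starDist_comm
  dist_triangle := starDist_triangle

/-- The metric star graph `Star_k(L)`: the quotient of the pseudometric space of points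
by the identification of points at pseudodistance zero (a metric space). -/
abbrev StarGraph (k : ℕ) (L : ℕ → ℝ) : Type := SeparationQuotient (StarPt k L)

/-- The restricted second configuration space `(Star_k)²_{r,L}`, as a topological subspace
of the product `Star_k(L) × Star_k(L)`. -/
abbrev ConfigSpace (k : ℕ) (L : ℕ → ℝ) (r : ℝ) : Type :=
  {pq : StarGraph k L × StarGraph k L // r ≤ dist pq.1 pq.2}

section
variable {k : ℕ} {L : ℕ → ℝ}

abbrev EdgeOK (k : ℕ) (L : ℕ → ℝ) (i : ℕ) : Prop := 1 ≤ i ∧ i ≤ k ∧ 0 ≤ L i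

noncomputable def ptc (i : ℕ) (h : EdgeOK k L i) (t : ℝ) : StarPt k L :=
  ⟨(i, max 0 (min t (L i))), h.1, h.2.1, le_max_left _ _, max_le h.2.2 (min_le_right _ _)⟩

lemma clamp_eq {i : ℕ} {t : ℝ} (h0 : 0 ≤ t) (h1 : t ≤ L i) : max 0 (min t (L i)) = t := by
  rw [min_eq_left h1, max_eq_right h0]

lemma clamp_lip (i : ℕ) (a b : ℝ) (c : ℝ) :
    |max 0 (min a c) - max 0 (min b c)| ≤ |a - b| := by
  rcases le_total a b with h | h <;> rcases le_total a c with h1 | h1 <;>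
    rcases le_total b c with h2 | h2 <;> rcases le_total a 0 with h3 | h3 <;>
    rcases le_total b 0 with h4 | h4 <;> rcases le_total c 0 with h5 | h5 <;>
    simp [min_eq_left, min_eq_right, max_eq_left, max_eq_right, abs_le, *] <;>
    constructor <;> linarith [abs_nonneg (a-b), le_abs_self (a-b), neg_abs_le (a-b)]

lemma lip_ptc (i : ℕ) (h : EdgeOK k L i) : LipschitzWith 1 (ptc i h) := by
  apply LipschitzWith.of_dist_le_mul
  intro a b
  have : dist (ptc i h a) (ptc i h b)
      = |max 0 (min a (L i)) - max 0 (min b (L i))| := by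
    show starDist _ _ = _
    rw [starDist, if_pos (show (ptc i h a).val.1 = (ptc i h b).val.1 from rfl)]
    rfl
  rw [this]
  simpa [Real.dist_eq] using clamp_lip i a b (L i)

noncomputable def sgp (i : ℕ) (h : EdgeOK k L i) (t : ℝ) : StarGraph k L :=
  SeparationQuotient.mk (ptc i h t)

lemma continuous_sgp (i : ℕ) (h : EdgeOK k L i) : Continuous (sgp i h) :=
  SeparationQuotient.continuous_mk.comp (lip_ptc i h).continuous

lemma dist_sq_same (i : ℕ) (h h' : EdgeOK k L i) {s t : ℝ} (hs0 : 0 ≤ s) (hs1 : s ≤ L i)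
    (ht0 : 0 ≤ t) (ht1 : t ≤ L i) : dist (sgp i h s) (sgp i h' t) = |s - t| := by
  rw [sgp, sgp, SeparationQuotient.dist_mk]
  show starDist _ _ = _
  rw [starDist, if_pos (show (ptc i h s).val.1 = (ptc i h' t).val.1 from rfl)]
  show |max 0 (min s (L i)) - max 0 (min t (L i))| = _
  rw [clamp_eq hs0 hs1, clamp_eq ht0 ht1]

lemma dist_sq_ne {i j : ℕ} (hij : i ≠ j) (h : EdgeOK k L i) (h' : EdgeOK k L j)
    {s t : ℝ} (hs0 : 0 ≤ s) (hs1 : s ≤ L i) (ht0 : 0 ≤ t) (ht1 : t ≤ L j) :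
    dist (sgp i h s) (sgp j h' t) = s + t := by
  rw [sgp, sgp, SeparationQuotient.dist_mk]
  show starDist _ _ = _
  rw [starDist, if_neg (show (ptc i h s).val.1 ≠ (ptc j h' t).val.1 from hij)]
  show max 0 (min s (L i)) + max 0 (min t (L j)) = _
  rw [clamp_eq hs0 hs1, clamp_eq ht0 ht1]

lemma sq_center (i j : ℕ) (h : EdgeOK k L i) (h' : EdgeOK k L j) :
    sgp i h 0 = sgp j h' 0 := by
  rw [sgp, sgp, SeparationQuotient.mk_eq_mk, Metric.inseparable_iff]
  show starDist _ _ = 0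
  rw [starDist]
  by_cases hij : (ptc i h 0 : StarPt k L).val.1 = (ptc j h' 0).val.1
  · rw [if_pos hij]
    show |max 0 (min 0 (L i)) - max 0 (min 0 (L j))| = 0
    rw [clamp_eq le_rfl h.2.2, clamp_eq le_rfl h'.2.2, sub_zero, abs_zero]
  · rw [if_neg hij]
    show max 0 (min 0 (L i)) + max 0 (min 0 (L j)) = 0
    rw [clamp_eq le_rfl h.2.2, clamp_eq le_rfl h'.2.2, add_zero]

end

section Moves
variable {k : ℕ} {L : ℕ → ℝ} {r : ℝ}

lemma line_mem (s t : ℝ) (u : unitInterval) :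
    (1 - (u : ℝ)) * s + u * t ∈ Set.uIcc s t := by
  rw [← segment_eq_uIcc]
  exact ⟨1 - u, u, by linarith [u.2.2], u.2.1, by linarith, by simp [smul_eq_mul]⟩

noncomputable def segPath (i : ℕ) (h : EdgeOK k L i) (s t : ℝ) :
    Path (sgp i h s) (sgp i h t) where
  toFun u := sgp i h ((1 - (u : ℝ)) * s + u * t)
  continuous_toFun := (continuous_sgp i h).comp (by fun_prop)
  source' := by norm_num
  target' := by norm_num

@[simp] lemma segPath_apply (i : ℕ) (h : EdgeOK k L i) (s t : ℝ) (u : unitInterval) :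
    segPath i h s t u = sgp i h ((1 - (u : ℝ)) * s + u * t) := rfl

lemma joinedIn_seg_snd {F : Set (StarGraph k L × StarGraph k L)} (p : StarGraph k L)
    {j : ℕ} (h : EdgeOK k L j) {s t : ℝ}
    (H : ∀ u ∈ Set.uIcc s t, (p, sgp j h u) ∈ F) :
    JoinedIn F (p, sgp j h s) (p, sgp j h t) :=
  ⟨(Path.refl p).prod (segPath j h s t), fun u => by
    simpa using H _ (line_mem s t u)⟩

lemma joinedIn_seg_fst {F : Set (StarGraph k L × StarGraph k L)} (q : StarGraph k L)
    {i : ℕ} (h : EdgeOK k L i) {s t : ℝ}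
    (H : ∀ u ∈ Set.uIcc s t, (sgp i h u, q) ∈ F) :
    JoinedIn F (sgp i h s, q) (sgp i h t, q) :=
  ⟨(segPath i h s t).prod (Path.refl q), fun u => by
    simpa using H _ (line_mem s t u)⟩

abbrev Conf (k : ℕ) (L : ℕ → ℝ) (r : ℝ) : Set (StarGraph k L × StarGraph k L) :=
  {pq | r ≤ dist pq.1 pq.2}

lemma mem_conf {x : StarGraph k L × StarGraph k L} : x ∈ Conf k L r ↔ r ≤ dist x.1 x.2 :=
  Iff.rfl

/-- Move the second point from `(j,t)` through the center to `(c,t')`, while the first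
point sits at `(i,s)` with `r ≤ s` and `i ≠ c`. -/
lemma sndToEdge {i j c : ℕ} (hi : EdgeOK k L i) (hj : EdgeOK k L j) (hc : EdgeOK k L c)
    (hic : i ≠ c) {s t t' : ℝ} (hs0 : 0 ≤ s) (hs1 : s ≤ L i) (ht0 : 0 ≤ t)
    (ht'0 : 0 ≤ t') (ht'1 : t' ≤ L c) (hrs : r ≤ s)
    (hseg : ∀ u, 0 ≤ u → u ≤ t → r ≤ dist (sgp i hi s) (sgp j hj u)) :
    JoinedIn (Conf k L r) (sgp i hi s, sgp j hj t) (sgp i hi s, sgp c hc t') := by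
  have j1 : JoinedIn (Conf k L r) (sgp i hi s, sgp j hj t) (sgp i hi s, sgp j hj 0) :=
    joinedIn_seg_snd _ hj (fun u hu => by
      rw [Set.uIcc_of_ge ht0] at hu
      exact hseg u hu.1 hu.2)
  have j2 : JoinedIn (Conf k L r) (sgp i hi s, sgp c hc 0) (sgp i hi s, sgp c hc t') :=
    joinedIn_seg_snd _ hc (fun u hu => by
      rw [Set.uIcc_of_le ht'0] at hu
      have hd : dist (sgp i hi s) (sgp c hc u) = s + u :=
        dist_sq_ne hic hi hc hs0 hs1 hu.1 (hu.2.trans ht'1)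
      show r ≤ _
      rw [hd]; linarith [hu.1])
  refine j1.trans ?_
  rw [sq_center j c hj hc]
  exact j2

/-- Move the first point from `(i,s)` through the center to `(c,s')`, while the second
point sits at `(j,t)` with `r ≤ t` and `j ≠ c`. -/
lemma fstToEdge {i j c : ℕ} (hi : EdgeOK k L i) (hj : EdgeOK k L j) (hc : EdgeOK k L c)
    (hjc : j ≠ c) {s t s' : ℝ} (ht0 : 0 ≤ t) (ht1 : t ≤ L j) (hs0 : 0 ≤ s)
    (hs'0 : 0 ≤ s') (hs'1 : s' ≤ L c) (hrt : r ≤ t)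
    (hseg : ∀ u, 0 ≤ u → u ≤ s → r ≤ dist (sgp i hi u) (sgp j hj t)) :
    JoinedIn (Conf k L r) (sgp i hi s, sgp j hj t) (sgp c hc s', sgp j hj t) := by
  have j1 : JoinedIn (Conf k L r) (sgp i hi s, sgp j hj t) (sgp i hi 0, sgp j hj t) :=
    joinedIn_seg_fst _ hi (fun u hu => by
      rw [Set.uIcc_of_ge hs0] at hu
      exact hseg u hu.1 hu.2)
  have j2 : JoinedIn (Conf k L r) (sgp c hc 0, sgp j hj t) (sgp c hc s', sgp j hj t) :=
    joinedIn_seg_fst _ hc (fun u hu => by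
      rw [Set.uIcc_of_le hs'0] at hu
      have hd : dist (sgp c hc u) (sgp j hj t) = u + t :=
        dist_sq_ne (fun h => hjc h.symm) hc hj hu.1 (hu.2.trans hs'1) ht0 ht1
      show r ≤ _
      rw [hd]; linarith [hu.1])
  refine j1.trans ?_
  rw [sq_center i c hi hc]
  exact j2

end Moves

section Reduce
variable {k : ℕ} {L : ℕ → ℝ} {r : ℝ}

/-- The first point sits at depth `r ≤ s` on edge `i`; the second point can retract to the
center and be moved anywhere. We standardize to the base configuration `((2,r),(3,r))`. -/
lemma finish (hr : 0 < r) (h2 : EdgeOK k L 2) (h3 : EdgeOK k L 3) (h4 : EdgeOK k L 4)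
    (hrL2 : r ≤ L 2) (hrL3 : r ≤ L 3) (hrL4 : r ≤ L 4)
    {i j : ℕ} (hi : EdgeOK k L i) (hj : EdgeOK k L j) {s t : ℝ}
    (hs1 : s ≤ L i) (ht0 : 0 ≤ t) (hrs : r ≤ s)
    (hseg : ∀ u, 0 ≤ u → u ≤ t → r ≤ dist (sgp i hi s) (sgp j hj u)) :
    JoinedIn (Conf k L r) (sgp i hi s, sgp j hj t) (sgp 2 h2 r, sgp 3 h3 r) := by
  have hs0 : 0 ≤ s := hr.le.trans hrs
  have hr0 : 0 ≤ r := hr.le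
  by_cases hi3 : i = 3
  · -- park the second point on edge 4, move the first to (2,r), then the second to (3,r)
    have hi4 : i ≠ 4 := by omega
    have j1 : JoinedIn (Conf k L r) (sgp i hi s, sgp j hj t) (sgp i hi s, sgp 4 h4 r) :=
      sndToEdge hi hj h4 hi4 hs0 hs1 ht0 hr0 hrL4 hrs hseg
    have j2 : JoinedIn (Conf k L r) (sgp i hi s, sgp 4 h4 r) (sgp 2 h2 r, sgp 4 h4 r) :=
      fstToEdge hi h4 h2 (by omega) hr0 hrL4 hs0 hr0 hrL2 le_rfl (fun u hu0 hu1 => by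
        rw [dist_sq_ne hi4 hi h4 hu0 (hu1.trans hs1) hr0 hrL4]
        linarith)
    have j3 : JoinedIn (Conf k L r) (sgp 2 h2 r, sgp 4 h4 r) (sgp 2 h2 r, sgp 3 h3 r) :=
      sndToEdge h2 h4 h3 (by omega) hr0 hrL2 hr0 hr0 hrL3 le_rfl (fun u hu0 hu1 => by
        rw [dist_sq_ne (by omega) h2 h4 hr0 hrL2 hu0 (hu1.trans hrL4)]
        linarith)
    exact (j1.trans j2).trans j3
  · -- park the second point on edge 3, then move the first to (2,r)
    have j1 : JoinedIn (Conf k L r) (sgp i hi s, sgp j hj t) (sgp i hi s, sgp 3 h3 r) :=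
      sndToEdge hi hj h3 hi3 hs0 hs1 ht0 hr0 hrL3 hrs hseg
    have j2 : JoinedIn (Conf k L r) (sgp i hi s, sgp 3 h3 r) (sgp 2 h2 r, sgp 3 h3 r) :=
      fstToEdge hi h3 h2 (by omega) hr0 hrL3 hs0 hr0 hrL2 le_rfl (fun u hu0 hu1 => by
        rw [dist_sq_ne hi3 hi h3 hu0 (hu1.trans hs1) hr0 hrL3]
        linarith)
    exact j1.trans j2

/-- Reduction from a "privileged" starting configuration: either the two points are on
different edges with the first one on a long edge, or on the same edge with the first
one further out. -/
lemma reduce (hr : 0 < r) (h2 : EdgeOK k L 2) (h3 : EdgeOK k L 3) (h4 : EdgeOK k L 4)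
    (hrL2 : r ≤ L 2) (hrL3 : r ≤ L 3) (hrL4 : r ≤ L 4)
    {i j : ℕ} (hi : EdgeOK k L i) (hj : EdgeOK k L j) {s t : ℝ}
    (hs0 : 0 ≤ s) (hs1 : s ≤ L i) (ht0 : 0 ≤ t) (ht1 : t ≤ L j)
    (hpriv : (i ≠ j ∧ 2 ≤ i ∧ r ≤ L i ∧ r ≤ s + t) ∨ (i = j ∧ t + r ≤ s)) :
    JoinedIn (Conf k L r) (sgp i hi s, sgp j hj t) (sgp 2 h2 r, sgp 3 h3 r) := by
  rcases hpriv with ⟨hij, _, hrLi, hrst⟩ | ⟨hij, hts⟩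
  · -- first move p outward to the tip of its (long) edge
    have j0 : JoinedIn (Conf k L r) (sgp i hi s, sgp j hj t) (sgp i hi (L i), sgp j hj t) :=
      joinedIn_seg_fst _ hi (fun u hu => by
        rw [Set.uIcc_of_le hs1] at hu
        show r ≤ _
        rw [dist_sq_ne hij hi hj (hs0.trans hu.1) hu.2 ht0 ht1]
        linarith [hu.1])
    refine j0.trans (finish hr h2 h3 h4 hrL2 hrL3 hrL4 hi hj le_rfl ht0 hrLi
      (fun u hu0 hu1 => ?_))
    rw [dist_sq_ne hij hi hj (hr.le.trans hrLi) le_rfl hu0 (hu1.trans ht1)]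
    linarith
  · subst hij
    refine finish hr h2 h3 h4 hrL2 hrL3 hrL4 hi hj hs1 ht0 (by linarith) ?_
    intro u hu0 hu1
    rw [dist_sq_same i hi hj hs0 hs1 hu0 (hu1.trans ht1)]
    rw [abs_of_nonneg (by linarith)]
    linarith

end Reduce

section Main
variable {k : ℕ} {L : ℕ → ℝ} {r : ℝ}

lemma swap_joinedIn {x b : StarGraph k L × StarGraph k L}
    (hJ : JoinedIn (Conf k L r) x b) :
    JoinedIn (Conf k L r) x.swap b.swap := by
  obtain ⟨γ, hγ⟩ := hJ
  exact ⟨γ.map continuous_swap, fun u => by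
    have := hγ u
    rw [mem_conf] at this ⊢
    simpa [dist_comm] using this⟩

/-- Connect the swapped base configuration to the base configuration. -/
lemma swapBase_joined (hr : 0 < r) (h2 : EdgeOK k L 2) (h3 : EdgeOK k L 3) (h4 : EdgeOK k L 4)
    (hrL2 : r ≤ L 2) (hrL3 : r ≤ L 3) (hrL4 : r ≤ L 4) :
    JoinedIn (Conf k L r) (sgp 3 h3 r, sgp 2 h2 r) (sgp 2 h2 r, sgp 3 h3 r) := by
  have hr0 : 0 ≤ r := hr.le
  have j1 : JoinedIn (Conf k L r) (sgp 3 h3 r, sgp 2 h2 r) (sgp 4 h4 r, sgp 2 h2 r) :=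
    fstToEdge h3 h2 h4 (by omega) hr0 hrL2 hr0 hr0 hrL4 le_rfl (fun u hu0 hu1 => by
      rw [dist_sq_ne (by omega) h3 h2 hu0 (hu1.trans hrL3) hr0 hrL2]
      linarith)
  have j2 : JoinedIn (Conf k L r) (sgp 4 h4 r, sgp 2 h2 r) (sgp 4 h4 r, sgp 3 h3 r) :=
    sndToEdge h4 h2 h3 (by omega) hr0 hrL4 hr0 hr0 hrL3 le_rfl (fun u hu0 hu1 => by
      rw [dist_sq_ne (by omega) h4 h2 hr0 hrL4 hu0 (hu1.trans hrL2)]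
      linarith)
  have j3 : JoinedIn (Conf k L r) (sgp 4 h4 r, sgp 3 h3 r) (sgp 2 h2 r, sgp 3 h3 r) :=
    fstToEdge h4 h3 h2 (by omega) hr0 hrL3 hr0 hr0 hrL2 le_rfl (fun u hu0 hu1 => by
      rw [dist_sq_ne (by omega) h4 h3 hu0 (hu1.trans hrL4) hr0 hrL3]
      linarith)
  exact (j1.trans j2).trans j3

lemma mk_eq_sgp (a : StarPt k L) :
    SeparationQuotient.mk a
      = sgp a.val.1 ⟨a.2.1, a.2.2.1, a.2.2.2.1.trans a.2.2.2.2⟩ a.val.2 := by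
  rw [sgp]
  congr 1
  exact Subtype.ext (Prod.ext rfl (clamp_eq a.2.2.2.1 a.2.2.2.2).symm)

lemma joined_to_base (hk : 4 ≤ k) (hr : 0 < r)
    (hLpos : ∀ i, 1 ≤ i → i ≤ k → 0 < L i)
    (hrL : ∀ i, 2 ≤ i → i ≤ k → r ≤ L i)
    (h2 : EdgeOK k L 2) (h3 : EdgeOK k L 3) (h4 : EdgeOK k L 4)
    (x : StarGraph k L × StarGraph k L) (hx : x ∈ Conf k L r) :
    JoinedIn (Conf k L r) x (sgp 2 h2 r, sgp 3 h3 r) := by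
  have hrL2 : r ≤ L 2 := hrL 2 le_rfl (by omega)
  have hrL3 : r ≤ L 3 := hrL 3 (by omega) (by omega)
  have hrL4 : r ≤ L 4 := hrL 4 (by omega) (by omega)
  obtain ⟨p, q⟩ := x
  obtain ⟨a, rfl⟩ := SeparationQuotient.surjective_mk p
  obtain ⟨b, rfl⟩ := SeparationQuotient.surjective_mk q
  obtain ⟨⟨i, s⟩, ha1, hak, ha0, haL⟩ := a
  obtain ⟨⟨j, t⟩, hb1, hbk, hb0, hbL⟩ := b
  have hi : EdgeOK k L i := ⟨ha1, hak, ha0.trans haL⟩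
  have hj : EdgeOK k L j := ⟨hb1, hbk, hb0.trans hbL⟩
  have ea : (SeparationQuotient.mk (⟨(i, s), ha1, hak, ha0, haL⟩ : StarPt k L) : StarGraph k L) = sgp i hi s := by
    exact mk_eq_sgp _
  have eb : (SeparationQuotient.mk (⟨(j, t), hb1, hbk, hb0, hbL⟩ : StarPt k L) : StarGraph k L) = sgp j hj t := by
    exact mk_eq_sgp _
  rw [mem_conf] at hx
  simp only at hx
  rw [ea, eb] at hx ⊢
  by_cases hij : i = j
  · -- same edge
    have hd : dist (sgp i hi s) (sgp j hj t) = |s - t| := by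
      subst hij; exact dist_sq_same i hi hj ha0 haL hb0 hbL
    rw [hd] at hx
    rcases abs_cases (s - t) with ⟨he, _⟩ | ⟨he, _⟩
    · exact reduce hr h2 h3 h4 hrL2 hrL3 hrL4 hi hj ha0 haL hb0 hbL
        (Or.inr ⟨hij, by linarith⟩)
    · have hJ : JoinedIn (Conf k L r) (sgp j hj t, sgp i hi s) (sgp 2 h2 r, sgp 3 h3 r) :=
        reduce hr h2 h3 h4 hrL2 hrL3 hrL4 hj hi hb0 hbL ha0 haL
          (Or.inr ⟨hij.symm, by linarith⟩)
      exact (swap_joinedIn hJ).trans (swapBase_joined hr h2 h3 h4 hrL2 hrL3 hrL4)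
  · -- different edges
    have hd : dist (sgp i hi s) (sgp j hj t) = s + t := dist_sq_ne hij hi hj ha0 haL hb0 hbL
    rw [hd] at hx
    by_cases hi2 : 2 ≤ i
    · exact reduce hr h2 h3 h4 hrL2 hrL3 hrL4 hi hj ha0 haL hb0 hbL
        (Or.inl ⟨hij, hi2, hrL i hi2 hak, hx⟩)
    · have hj2 : 2 ≤ j := by omega
      have hJ : JoinedIn (Conf k L r) (sgp j hj t, sgp i hi s) (sgp 2 h2 r, sgp 3 h3 r) :=
        reduce hr h2 h3 h4 hrL2 hrL3 hrL4 hj hi hb0 hbL ha0 haL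
          (Or.inl ⟨fun h => hij h.symm, hj2, hrL j hj2 hbk, by linarith⟩)
      exact (swap_joinedIn hJ).trans (swapBase_joined hr h2 h3 h4 hrL2 hrL3 hrL4)

end Main

/-- if `4 ≤ k` and `0 < r ≤ L i` for every `i ∈ {2,…,k}` (with `L 1 > 0`
arbitrary), then the restricted second configuration space `(Star_k)²_{r,L}` is
path-connected. -/
theorem configSpace_pathConnected (k : ℕ) (hk : 4 ≤ k) (r : ℝ) (hr : 0 < r) (L : ℕ → ℝ)
    (hLpos : ∀ i, 1 ≤ i → i ≤ k → 0 < L i)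
    (hrL : ∀ i, 2 ≤ i → i ≤ k → r ≤ L i) :
    PathConnectedSpace (ConfigSpace k L r) := by
  have h2 : EdgeOK k L 2 := ⟨by omega, by omega, (hLpos 2 (by omega) (by omega)).le⟩
  have h3 : EdgeOK k L 3 := ⟨by omega, by omega, (hLpos 3 (by omega) (by omega)).le⟩
  have h4 : EdgeOK k L 4 := ⟨by omega, by omega, (hLpos 4 (by omega) (by omega)).le⟩
  have hrL2 : r ≤ L 2 := hrL 2 le_rfl (by omega)
  have hrL3 : r ≤ L 3 := hrL 3 (by omega) (by omega)
  have hbase : (sgp 2 h2 r, sgp 3 h3 r) ∈ Conf k L r := by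
    rw [mem_conf]
    simp only
    rw [dist_sq_ne (by omega) h2 h3 hr.le hrL2 hr.le hrL3]
    linarith
  have hpc : IsPathConnected (Conf k L r) := by
    refine ⟨(sgp 2 h2 r, sgp 3 h3 r), hbase, ?_⟩
    intro y hy
    exact (joined_to_base hk hr hLpos hrL h2 h3 h4 y hy).symm
  exact isPathConnected_iff_pathConnectedSpace.mp hpc
end
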